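/- arXiv:2207.00194 — 6 statements merged into one kernel-verified Lean document; each statement's English description precedes it below -/
import Mathlib

section
/- There is an absolute constant C > 0 such that the following holds. Let θ₀, θ₁ ∈ ℝ and v ∈ ℝ with |v| ≤ 1/10 satisfy cot(θ₁) = cot(θ₀) - v (with both cotangents defined). Then |e^{2iθ₁} - e^{2iθ₀}·e^{2iv·sin²(θ₀)}| ≤ C·v². -/
open Complex


lemma cot_sub_I_ne (c : ℝ) : (c : ℂ) - I ≠ 0 := by
  intro hz
  have := congrArg Complex.im hz
  simp at this

lemma cot_add_I_ne (c : ℝ) : (c : ℂ) + I ≠ 0 := by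
  intro hz
  have := congrArg Complex.im hz
  simp at this

lemma exp_two_I_eq (θ : ℝ) (h : Real.sin θ ≠ 0) :
    Complex.exp (2 * I * θ) = ((Real.cot θ : ℂ) + I) / ((Real.cot θ : ℂ) - I) := by
  have hE : Complex.exp (2 * I * θ) ≠ 1 := by
    intro hz
    rw [Complex.exp_eq_one_iff] at hz
    obtain ⟨n, hn⟩ := hz
    have hθ : (θ : ℂ) = (n : ℂ) * Real.pi := by
      linear_combination (-I/2) * hn + ((θ:ℂ) - (n:ℂ) * (Real.pi:ℂ)) * Complex.I_sq
    have hθ' : θ = (n : ℤ) * Real.pi := by exact_mod_cast hθ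
    exact h (hθ' ▸ Real.sin_int_mul_pi n)
  have hcot : (Real.cot θ : ℂ) =
      (Complex.exp (2 * I * θ) + 1) / (I * (1 - Complex.exp (2 * I * θ))) := by
    rw [Complex.ofReal_cot, Complex.cot_eq_exp_ratio]
  set E := Complex.exp (2 * I * θ) with hEdef
  have hden : I * (1 - E) ≠ 0 := mul_ne_zero I_ne_zero (sub_ne_zero.2 (Ne.symm hE))
  rw [eq_div_iff (cot_sub_I_ne _)]
  rw [eq_div_iff hden] at hcot
  linear_combination I * hcot + ((Real.cot θ : ℂ) * (E - 1)) * Complex.I_sq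


/-- The key identity behind the second-order Prüfer angle expansion:
if `cot θ₁ = cot θ₀ - v` with `|v| ≤ 1/10`, then
`e^{2iθ₁} = e^{2iθ₀}·e^{2iv·sin²θ₀} + O(v²)` with an absolute constant. -/
theorem exp_cot_perturbation : ∃ C : ℝ, 0 < C ∧
    ∀ θ₀ θ₁ v : ℝ, |v| ≤ 1 / 10 →
      Real.sin θ₀ ≠ 0 → Real.sin θ₁ ≠ 0 →
      Real.cot θ₁ = Real.cot θ₀ - v →
      ‖Complex.exp (2 * Complex.I * (θ₁ : ℂ))
          - Complex.exp (2 * Complex.I * (θ₀ : ℂ))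
            * Complex.exp (2 * Complex.I * ((v * (Real.sin θ₀) ^ 2 : ℝ) : ℂ))‖
        ≤ C * v ^ 2 := by
  refine ⟨10, by norm_num, ?_⟩
  intro θ₀ θ₁ v hv hs0 hs1 hcot
  set c : ℝ := Real.cot θ₀ with hc
  set s : ℝ := Real.sin θ₀ with hs
  set a : ℂ := (v : ℂ) / ((c : ℂ) + I) with ha
  set b : ℂ := (v : ℂ) / ((c : ℂ) - I) with hb
  have hneP : (c : ℂ) + I ≠ 0 := cot_add_I_ne c
  have hneM : (c : ℂ) - I ≠ 0 := cot_sub_I_ne c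
  -- |c+I| ≥ 1, |c-I| ≥ 1
  have habsP : 1 ≤ ‖((c : ℂ) + I)‖ := by
    have := Complex.abs_im_le_norm ((c : ℂ) + I)
    simpa using this
  have habsM : 1 ≤ ‖((c : ℂ) - I)‖ := by
    have := Complex.abs_im_le_norm ((c : ℂ) - I)
    simp at this
    simpa using this
  have hav : ‖a‖ ≤ |v| := by
    rw [ha, norm_div, Complex.norm_real, Real.norm_eq_abs]
    calc |v| / ‖((c:ℂ) + I)‖ ≤ |v| / 1 := by
          apply div_le_div_of_nonneg_left (abs_nonneg v) (by norm_num) habsP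
      _ = |v| := by norm_num
  have hbv : ‖b‖ ≤ |v| := by
    rw [hb, norm_div, Complex.norm_real, Real.norm_eq_abs]
    calc |v| / ‖((c:ℂ) - I)‖ ≤ |v| / 1 := by
          apply div_le_div_of_nonneg_left (abs_nonneg v) (by norm_num) habsM
      _ = |v| := by norm_num
  have ha10 : ‖a‖ ≤ 1/10 := hav.trans hv
  have hb10 : ‖b‖ ≤ 1/10 := hbv.trans hv
  have h1b : ‖(1 - b)‖ ≥ 9/10 := by
    have := norm_sub_norm_le (1 : ℂ) b
    simp only [norm_one] at this
    linarith
  have h1bne : (1 : ℂ) - b ≠ 0 := by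
    intro hz
    rw [hz] at h1b
    simp at h1b
    linarith
  -- sin² identity
  have hs2 : s ^ 2 * (1 + c ^ 2) = 1 := by
    rw [hc, Real.cot_eq_cos_div_sin, hs]
    have h := Real.sin_sq_add_cos_sq θ₀
    have h0 : Real.sin θ₀ ≠ 0 := hs0
    field_simp
    linarith
  -- step 1: exp(2iθ₁)
  have hE1 : Complex.exp (2 * I * θ₁) = (((c - v : ℝ) : ℂ) + I) / (((c - v : ℝ) : ℂ) - I) := by
    rw [exp_two_I_eq θ₁ hs1, hcot]
  -- step 2: ratio factorization
  have h1 : (c : ℂ) - (v : ℂ) - I ≠ 0 := by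
    intro hz
    have := congrArg Complex.im hz
    simp at this
  have hA : (1:ℂ) - a = (((c:ℂ) - v) + I) / ((c:ℂ) + I) := by
    rw [ha, eq_div_iff hneP, sub_mul, div_mul_cancel₀ _ hneP]; ring
  have hB : (1:ℂ) - b = (((c:ℂ) - v) - I) / ((c:ℂ) - I) := by
    rw [hb, eq_div_iff hneM, sub_mul, div_mul_cancel₀ _ hneM]; ring
  have hratio : Complex.exp (2 * I * θ₁)
      = Complex.exp (2 * I * θ₀) * ((1 - a) / (1 - b)) := by
    rw [hE1, exp_two_I_eq θ₀ hs0, ← hc, hA, hB]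
    push_cast
    rw [div_div_div_eq, div_mul_div_comm,
      div_eq_div_iff h1 (mul_ne_zero hneM (mul_ne_zero hneP h1))]
    ring
  -- step 3: exp(2iv s²) = exp (b - a)
  have hbma : 2 * I * ((v * s ^ 2 : ℝ) : ℂ) = b - a := by
    rw [ha, hb, div_sub_div _ _ hneM hneP]
    rw [eq_div_iff (mul_ne_zero hneM hneP)]
    push_cast
    have hs2' : (s : ℂ) ^ 2 * (1 + (c : ℂ) ^ 2) = 1 := by exact_mod_cast hs2
    linear_combination (2 * I * (v:ℂ)) * hs2' + (-2 * I * (v:ℂ) * (s:ℂ)^2) * Complex.I_sq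
  have hexpv : Complex.exp (2 * I * ((v * s ^ 2 : ℝ) : ℂ)) = Complex.exp (b - a) := by
    rw [hbma]
  -- step 4: reduce to the ratio estimate
  have habs0 : ‖(Complex.exp (2 * I * (θ₀ : ℂ)))‖ = 1 := by
    rw [Complex.norm_exp]
    simp
  have hmain : ‖(Complex.exp (2 * I * (θ₁:ℂ))
      - Complex.exp (2 * I * (θ₀:ℂ)) * Complex.exp (2 * I * ((v * s ^ 2 : ℝ) : ℂ)))‖
      = ‖((1 - a) / (1 - b) - Complex.exp (b - a))‖ := by
    rw [hratio, hexpv, ← mul_sub, norm_mul, habs0, one_mul]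
  rw [hmain]
  -- step 5: the estimate
  set X : ℂ := Complex.exp (-a) with hX
  set Y : ℂ := Complex.exp b with hY
  have hXY : X * Y = Complex.exp (b - a) := by
    rw [hX, hY, ← Complex.exp_add]; ring_nf
  have key : (1 - a) / (1 - b) - Complex.exp (b - a)
      = ((1 - a) - X) / (1 - b) + X * (b ^ 2 / (1 - b) + ((1 + b) - Y)) := by
    rw [← hXY]
    field_simp
    ring
  rw [key]
  have e1 : ‖((1 - a) - X)‖ ≤ v ^ 2 := by
    have h := Complex.norm_exp_sub_one_sub_id_le (x := -a) (by rw [norm_neg]; exact ha10.trans (by norm_num))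
    have : (1 - a) - X = -(Complex.exp (-a) - 1 - (-a)) := by rw [hX]; ring
    rw [this, norm_neg]
    calc ‖(Complex.exp (-a) - 1 - (-a))‖ ≤ ‖(-a)‖ ^ 2 := h
      _ = ‖a‖ ^ 2 := by rw [norm_neg]
      _ ≤ |v| ^ 2 := pow_le_pow_left₀ (norm_nonneg a) hav 2
      _ = v ^ 2 := sq_abs v
  have e2 : ‖((1 + b) - Y)‖ ≤ v ^ 2 := by
    have h := Complex.norm_exp_sub_one_sub_id_le (x := b) (hb10.trans (by norm_num))
    have : (1 + b) - Y = -(Complex.exp b - 1 - b) := by rw [hY]; ring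
    rw [this, norm_neg]
    calc ‖(Complex.exp b - 1 - b)‖ ≤ ‖b‖ ^ 2 := h
      _ ≤ |v| ^ 2 := pow_le_pow_left₀ (norm_nonneg b) hbv 2
      _ = v ^ 2 := sq_abs v
  have eb2 : ‖(b ^ 2)‖ ≤ v ^ 2 := by
    rw [norm_pow]
    calc ‖b‖ ^ 2 ≤ |v| ^ 2 := pow_le_pow_left₀ (norm_nonneg b) hbv 2
      _ = v ^ 2 := sq_abs v
  have hinv : ∀ z : ℂ, ‖(z / (1 - b))‖ ≤ ‖z‖ * (10/9) := by
    intro z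
    rw [norm_div]
    calc ‖z‖ / ‖(1 - b)‖ ≤ ‖z‖ / (9/10) :=
          div_le_div_of_nonneg_left (norm_nonneg z) (by norm_num) h1b
      _ = ‖z‖ * (10/9) := by ring
  have eX : ‖X‖ ≤ 3 := by
    rw [hX, Complex.norm_exp]
    have h1 : (-a).re ≤ 1 := by
      have := Complex.abs_re_le_norm (-a)
      have h2 : ‖(-a)‖ ≤ 1/10 := by rw [norm_neg]; exact ha10
      have := abs_le.1 ((le_trans this h2))
      linarith
    calc Real.exp ((-a).re) ≤ Real.exp 1 := Real.exp_le_exp.2 h1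
      _ ≤ 3 := by linarith [Real.exp_one_lt_d9]
  have hv2 : (0:ℝ) ≤ v ^ 2 := sq_nonneg v
  calc ‖(((1 - a) - X) / (1 - b) + X * (b ^ 2 / (1 - b) + ((1 + b) - Y)))‖
      ≤ ‖(((1 - a) - X) / (1 - b))‖
        + ‖(X * (b ^ 2 / (1 - b) + ((1 + b) - Y)))‖ := norm_add_le _ _
    _ ≤ ‖((1 - a) - X)‖ * (10/9)
        + ‖X‖ * (‖(b ^ 2 / (1 - b))‖ + ‖((1 + b) - Y)‖) := by
        rw [norm_mul]
        gcongr
        · exact hinv _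
        · exact norm_add_le _ _
    _ ≤ v ^ 2 * (10/9) + 3 * (v ^ 2 * (10/9) + v ^ 2) :=
        add_le_add (mul_le_mul_of_nonneg_right e1 (by norm_num))
          (mul_le_mul eX
            (add_le_add ((hinv _).trans (mul_le_mul_of_nonneg_right eb2 (by norm_num))) e2)
            (add_nonneg (norm_nonneg _) (norm_nonneg _)) (by norm_num))
    _ ≤ 10 * v ^ 2 := by linarith
end

section
/- Let E ∈ (-2,2) with E = 2cos(πk), k ∈ (0,1), let V : ℕ → ℝ, and let θ(n) be the Prüfer angle of a solution of u(n+1) + u(n-1) + V(n)u(n) = E·u(n), so that cot(πθ(n+1) - πk) = cot(πθ(n)) - V(n)/sin(πk). If |V(n)/sin(πk)| < 1/2, then |θ(n+1) - θ(n) - k| ≤ |V(n)/sin(πk)|. -/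
noncomputable section

/-- `u` solves the eigen-equation `u(n+1) + u(n-1) + V(n)u(n) = E·u(n)` for all `n ≥ 1`. -/
def EigenEq (V : ℕ → ℝ) (E : ℝ) (u : ℕ → ℝ) : Prop :=
  ∀ n : ℕ, 1 ≤ n → u (n + 1) + u (n - 1) + V n * u n = E * u n

/-- `(R, θ)` are modified Prüfer variables (radius and angle) of the solution `u`,
with quasimomentum `k`: `u(n-1) = R(n)·sin(πθ(n) - πk)` and
`(u(n) - cos(πk)·u(n-1))/sin(πk) = R(n)·cos(πθ(n) - πk)`, with `R(n) > 0`. -/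
def PruferRel (k : ℝ) (u R θ : ℕ → ℝ) : Prop :=
  ∀ n : ℕ, 1 ≤ n → 0 < R n ∧
    u (n - 1) = R n * Real.sin (Real.pi * θ n - Real.pi * k) ∧
    (u n - Real.cos (Real.pi * k) * u (n - 1)) / Real.sin (Real.pi * k)
      = R n * Real.cos (Real.pi * θ n - Real.pi * k)

/-- The Prüfer angle is chosen along the continuous branch:
`θ(n+1) - θ(n) - k ∈ (-1/2, 1/2)`. -/
def BranchCond (k : ℝ) (θ : ℕ → ℝ) : Prop :=
  ∀ n : ℕ, 1 ≤ n → |θ (n + 1) - θ n - k| < 1 / 2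

set_option maxHeartbeats 1000000 in
/-- First-order estimate for the Prüfer angle increment (Simon, Proposition 2.4):
if `|V(n)/sin(πk)| < 1/2` then `|θ(n+1) - θ(n) - k| ≤ |V(n)/sin(πk)|`. -/
theorem prufer_angle_increment_bound (E k : ℝ) (hE : E ∈ Set.Ioo (-2 : ℝ) 2)
    (hk : k ∈ Set.Ioo (0 : ℝ) 1) (hEk : E = 2 * Real.cos (Real.pi * k))
    (V u R θ : ℕ → ℝ) (hu : u ≠ 0)
    (heq : EigenEq V E u) (hpr : PruferRel k u R θ) (hbr : BranchCond k θ)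
    (n : ℕ) (hn : 1 ≤ n) (hV : |V n / Real.sin (Real.pi * k)| < 1 / 2) :
    |θ (n + 1) - θ n - k| ≤ |V n / Real.sin (Real.pi * k)| := by
  have heq : ∀ n : ℕ, 1 ≤ n → u (n + 1) + u (n - 1) + V n * u n = E * u n := heq
  have hpr : ∀ n : ℕ, 1 ≤ n → 0 < R n ∧
      u (n - 1) = R n * Real.sin (Real.pi * θ n - Real.pi * k) ∧
      (u n - Real.cos (Real.pi * k) * u (n - 1)) / Real.sin (Real.pi * k)
        = R n * Real.cos (Real.pi * θ n - Real.pi * k) := hpr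
  have hbr : ∀ n : ℕ, 1 ≤ n → |θ (n + 1) - θ n - k| < 1 / 2 := hbr
  obtain ⟨hk0, hk1⟩ := hk
  have hπ := Real.pi_pos
  have hκ0 : 0 < Real.pi * k := by positivity
  have hκπ : Real.pi * k < Real.pi := by
    have := mul_lt_mul_of_pos_left hk1 hπ
    linarith
  have hs : 0 < Real.sin (Real.pi * k) := Real.sin_pos_of_pos_of_lt_pi hκ0 hκπ
  set s := Real.sin (Real.pi * k) with hs_def
  set c := Real.cos (Real.pi * k) with hc_def
  obtain ⟨hR1, h1a, h1b⟩ := hpr n hn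
  obtain ⟨hR2, h2a, h2b⟩ := hpr (n + 1) (by omega)
  simp only [Nat.add_sub_cancel] at h2a
  have heqn := heq n hn
  set α := Real.pi * θ n with hα
  set β := Real.pi * θ (n + 1) - Real.pi * k with hβ
  clear_value s c α β
  have hun : u n = R n * Real.sin α := by
    have h1b' : u n = c * u (n - 1) + s * (R n * Real.cos (α - Real.pi * k)) := by
      field_simp at h1b; linarith
    rw [h1b', h1a]
    have hsa : Real.sin α = Real.sin ((α - Real.pi * k) + Real.pi * k) := by ring_nf
    rw [hsa, Real.sin_add, ← hs_def, ← hc_def]; ring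
  have hA : R (n + 1) * Real.sin β = R n * Real.sin α := by rw [← h2a, hun]
  have hB : R (n + 1) * Real.cos β * s = R n * (s * Real.cos α - V n * Real.sin α) := by
    have h2b' : u (n + 1) = c * u n + s * (R (n + 1) * Real.cos β) := by
      field_simp at h2b; rw [Nat.add_sub_cancel] at h2b; linarith
    have hE2 : u (n + 1) = 2 * c * u n - u (n - 1) - V n * u n := by
      rw [hEk] at heqn; linarith
    have hcomb : s * (R (n + 1) * Real.cos β) = c * u n - u (n - 1) - V n * u n := by
      linarith
    rw [hun, h1a, Real.sin_sub, ← hs_def, ← hc_def] at hcomb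
    linear_combination hcomb
  set δ := V n / s with hδdef
  clear_value δ
  have hVs : V n = δ * s := by rw [hδdef]; exact (div_mul_cancel₀ (V n) (ne_of_gt hs)).symm
  have hB' : R (n + 1) * Real.cos β = R n * (Real.cos α - δ * Real.sin α) := by
    apply mul_right_cancel₀ (ne_of_gt hs)
    rw [hVs] at hB; linear_combination hB
  set x := θ (n + 1) - θ n - k with hxdef
  clear_value x
  have hβα : β - α = Real.pi * x := by rw [hβ, hα, hxdef]; ring
  have hsin : R (n + 1) * Real.sin (Real.pi * x) = R n * (δ * Real.sin α ^ 2) := by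
    rw [← hβα, Real.sin_sub]
    linear_combination Real.cos α * hA - Real.sin α * hB'
  have hcos : R (n + 1) * Real.cos (Real.pi * x) = R n * (1 - δ * Real.sin α * Real.cos α) := by
    rw [← hβα, Real.cos_sub]
    have hpy := Real.sin_sq_add_cos_sq α
    linear_combination Real.cos α * hB' + Real.sin α * hA + R n * hpy
  have hx2 : |x| < 1 / 2 := by rw [hxdef]; exact hbr n hn
  have hδ2 : |δ| < 1 / 2 := hV
  have habs : |Real.pi * x| = Real.pi * |x| := by rw [abs_mul, abs_of_pos hπ]
  have hπx : |Real.pi * x| < Real.pi / 2 := by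
    rw [habs]
    have := mul_lt_mul_of_pos_left hx2 hπ
    linarith
  have hπx' := abs_lt.mp hπx
  have hcosx : 0 < Real.cos (Real.pi * x) :=
    Real.cos_pos_of_mem_Ioo ⟨by linarith [hπx'.1], hπx'.2⟩
  have hsina := Real.abs_sin_le_one α
  have hcosa := Real.abs_cos_le_one α
  have hsc : |δ * Real.sin α * Real.cos α| ≤ |δ| := by
    rw [abs_mul, abs_mul]
    calc |δ| * |Real.sin α| * |Real.cos α| ≤ |δ| * 1 * 1 := by
          apply mul_le_mul (mul_le_mul le_rfl hsina (abs_nonneg _) (abs_nonneg _)) hcosa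
            (abs_nonneg _) (by positivity)
      _ = |δ| := by ring
  have hbound : 1 / 2 < 1 - δ * Real.sin α * Real.cos α := by
    have := (abs_lt.mp (lt_of_le_of_lt hsc hδ2)).2
    linarith
  have hkey : Real.sin (Real.pi * x) * (1 - δ * Real.sin α * Real.cos α)
      = Real.cos (Real.pi * x) * (δ * Real.sin α ^ 2) := by
    apply mul_left_cancel₀ (ne_of_gt hR2)
    linear_combination (1 - δ * Real.sin α * Real.cos α) * hsin - δ * Real.sin α ^ 2 * hcos
  rcases eq_or_ne x 0 with h0 | h0
  · rw [h0]; simp [abs_nonneg δ]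
  · have hx0 : 0 < |x| := abs_pos.mpr h0
    -- |sin(πx)| ≤ 2 * cos(πx) * |δ|
    have hsinb : |Real.sin (Real.pi * x)| ≤ 2 * Real.cos (Real.pi * x) * |δ| := by
      have h1 : |Real.sin (Real.pi * x)| * (1 - δ * Real.sin α * Real.cos α)
          = Real.cos (Real.pi * x) * (|δ| * Real.sin α ^ 2) := by
        calc |Real.sin (Real.pi * x)| * (1 - δ * Real.sin α * Real.cos α)
            = |Real.sin (Real.pi * x) * (1 - δ * Real.sin α * Real.cos α)| := by
              rw [abs_mul, abs_of_pos (by linarith : (0:ℝ) < 1 - δ * Real.sin α * Real.cos α)]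
          _ = |Real.cos (Real.pi * x) * (δ * Real.sin α ^ 2)| := by rw [hkey]
          _ = Real.cos (Real.pi * x) * (|δ| * Real.sin α ^ 2) := by
              rw [abs_mul, abs_of_pos hcosx, abs_mul, abs_pow, sq_abs]
      have e1 : |δ| * Real.sin α ^ 2 ≤ |δ| :=
        mul_le_of_le_one_right (abs_nonneg δ) (Real.sin_sq_le_one α)
      have e2 : Real.cos (Real.pi * x) * (|δ| * Real.sin α ^ 2)
          ≤ Real.cos (Real.pi * x) * |δ| := mul_le_mul_of_nonneg_left e1 hcosx.le
      have e3 : |Real.sin (Real.pi * x)| * (1 / 2)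
          ≤ |Real.sin (Real.pi * x)| * (1 - δ * Real.sin α * Real.cos α) :=
        mul_le_mul_of_nonneg_left hbound.le (abs_nonneg _)
      linarith
    -- π|x| < tan(π|x|) = |sin(πx)|/cos(πx)
    have hsineq : Real.sin (Real.pi * |x|) = |Real.sin (Real.pi * x)| := by
      rcases abs_cases x with ⟨h, hxx⟩ | ⟨h, hxx⟩
      · rw [h, abs_of_nonneg]
        exact Real.sin_nonneg_of_nonneg_of_le_pi (mul_nonneg hπ.le hxx)
          (by linarith [hπx'.2])
      · rw [h, show Real.pi * (-x) = -(Real.pi * x) by ring, Real.sin_neg, abs_of_nonpos]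
        exact Real.sin_nonpos_of_nonpos_of_neg_pi_le
          (mul_nonpos_of_nonneg_of_nonpos hπ.le hxx.le) (by linarith [hπx'.1])
    have hcoseq : Real.cos (Real.pi * |x|) = Real.cos (Real.pi * x) := by
      rw [← habs, Real.cos_abs]
    have htan : Real.pi * |x| < Real.tan (Real.pi * |x|) :=
      Real.lt_tan (by positivity) (by rw [habs] at hπx; exact hπx)
    rw [Real.tan_eq_sin_div_cos, hsineq, hcoseq] at htan
    have hfin : Real.pi * |x| < 2 * |δ| := by
      have h2 : |Real.sin (Real.pi * x)| / Real.cos (Real.pi * x) ≤ 2 * |δ| := by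
        rw [div_le_iff₀ hcosx]; linarith
      linarith
    have h3 : 3 * |x| ≤ Real.pi * |x| :=
      mul_le_mul_of_nonneg_right (by linarith [Real.pi_gt_three]) (abs_nonneg x)
    have : |x| < |δ| := by linarith [abs_nonneg δ, abs_nonneg x]
    exact this.le
end
end

section
/- There is an absolute constant C > 0 such that the following holds. Let E ∈ (-2,2) with E = 2cos(πk), k ∈ (0,1), let V : ℕ → ℝ, and let θ(n) be the Prüfer angle of a solution of u(n+1) + u(n-1) + V(n)u(n) = E·u(n), satisfying cot(πθ(n+1) - πk) = cot(πθ(n)) - V(n)/sin(πk). If |V(n)/sin(πk)| < 1/10, then |θ(n+1) - θ(n) - k - sin²(πθ(n))·V(n)/(π·sin(πk))| ≤ C·V(n)²/sin²(πk). -/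
noncomputable section

private lemma prufer_aux0 {x : ℝ} (h0 : 0 ≤ x) (h : x < Real.pi/2) :
    |x - Real.sin x| ≤ x^3/2 := by
  have h1 : Real.sin x ≤ x := Real.sin_le h0
  have h2 : x * Real.cos x ≤ Real.sin x := by
    rcases h0.eq_or_lt with rfl|hx
    · simp
    · have ht := Real.lt_tan hx h
      have hc : 0 < Real.cos x := Real.cos_pos_of_mem_Ioo
        ⟨by linarith [Real.pi_pos], h⟩
      rw [Real.tan_eq_sin_div_cos, lt_div_iff₀ hc] at ht
      linarith
  have h3 : 1 - x^2/2 ≤ Real.cos x := Real.one_sub_sq_div_two_le_cos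
  rw [abs_of_nonneg (by linarith)]
  nlinarith [mul_le_mul_of_nonneg_left (show 1 - Real.cos x ≤ x^2/2 by linarith) h0]

private lemma prufer_aux1 {x : ℝ} (h : |x| < Real.pi/2) :
    |x - Real.sin x| ≤ |x|^3/2 := by
  rcases le_or_gt 0 x with hx|hx
  · rw [abs_of_nonneg hx] at h ⊢; exact prufer_aux0 hx h
  · rw [abs_of_neg hx] at h ⊢
    have h2 := prufer_aux0 (neg_nonneg.2 hx.le) h
    rw [Real.sin_neg] at h2
    have h3 : |-(x - Real.sin x)| ≤ (-x)^3/2 := by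
      convert h2 using 2; ring
    rwa [abs_neg] at h3

set_option maxHeartbeats 1000000


private lemma prufer_arith (v sa ca sx cx x : ℝ)
    (hpyth : sa^2 + ca^2 = 1) (hcx : |cx| ≤ 1)
    (hv : |v| < 1/10)
    (hstar' : sx = v * sa * sa * cx + v * sa * ca * sx)
    (hjordan : 2 * |x| ≤ Real.pi * |sx|) (hpi4 : Real.pi ≤ 4)
    (hxsx : |x - sx| ≤ |x|^3/2) (hcx1 : |cx - 1| ≤ x^2/2) :
    |x - v * sa^2| ≤ 2 * v^2 := by
  have hv0 : 0 ≤ |v| := abs_nonneg v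
  have hx0 : 0 ≤ |x| := abs_nonneg x
  have hsa1 : sa^2 ≤ 1 := by nlinarith [sq_nonneg ca]
  have hsaca : |sa * ca| ≤ 1/2 := by
    rw [abs_le]
    constructor <;> nlinarith [sq_nonneg (sa + ca), sq_nonneg (sa - ca)]
  -- |sx| ≤ (11/10)|v|
  have hA : |sx| ≤ (11/10) * |v| := by
    have h1 : sx * (1 - v * (sa * ca)) = v * sa^2 * cx := by
      linear_combination hstar'
    have h2 : |v * (sa * ca)| ≤ |v| * (1/2) := by
      rw [abs_mul]; exact mul_le_mul_of_nonneg_left hsaca hv0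
    have h3 : (19:ℝ)/20 ≤ 1 - v * (sa * ca) := by
      have := le_abs_self (v * (sa * ca)); linarith
    have h4 : |v * sa^2 * cx| ≤ |v| := by
      rw [abs_mul, abs_mul, abs_of_nonneg (sq_nonneg sa)]
      have i1 : sa^2 * |cx| ≤ 1 := by
        have := mul_le_mul hsa1 hcx (abs_nonneg cx) zero_le_one
        linarith
      have i2 := mul_le_mul_of_nonneg_left i1 hv0
      nlinarith [i2]
    have h5 : |sx| * (19/20) ≤ |v| := by
      calc |sx| * (19/20) ≤ |sx| * (1 - v * (sa * ca)) :=
            mul_le_mul_of_nonneg_left h3 (abs_nonneg sx)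
        _ = |sx * (1 - v * (sa * ca))| := by
            rw [abs_mul, abs_of_nonneg (by linarith : (0:ℝ) ≤ 1 - v * (sa * ca))]
        _ = |v * sa^2 * cx| := by rw [h1]
        _ ≤ |v| := h4
    linarith
  -- |x| ≤ (11/5)|v|
  have hB : |x| ≤ (11/5) * |v| := by
    have h1 : Real.pi * |sx| ≤ 4 * |sx| :=
      mul_le_mul_of_nonneg_right hpi4 (abs_nonneg sx)
    linarith
  have hx2 : |x|^2 ≤ (121/25) * |v|^2 := by
    have := mul_le_mul hB hB hx0 (by positivity : (0:ℝ) ≤ 11/5 * |v|)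
    nlinarith [this]
  have hx3 : |x|^3 ≤ (1331/125) * |v|^3 := by
    have := mul_le_mul hx2 hB hx0 (by positivity : (0:ℝ) ≤ 121/25 * |v|^2)
    nlinarith [this]
  have hv3 : |v|^3 ≤ (1/10) * |v|^2 := by
    have := mul_le_mul_of_nonneg_left hv.le (pow_nonneg hv0 2)
    nlinarith [this]
  -- term bounds
  have t1 : |x - sx| ≤ (3/5) * |v|^2 := by
    linarith [hxsx, hx3, hv3, pow_nonneg hv0 2]
  have t2 : |v * sa^2 * (cx - 1)| ≤ (1/4) * |v|^2 := by
    have e : |v * sa^2 * (cx - 1)| = |v| * sa^2 * |cx - 1| := by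
      rw [abs_mul, abs_mul, abs_of_nonneg (sq_nonneg sa)]
    rw [e]
    have h1 : sa^2 * |cx - 1| ≤ x^2/2 := by
      have := mul_le_mul hsa1 hcx1 (abs_nonneg _) zero_le_one
      linarith
    have h2 : x^2 ≤ (121/25) * |v|^2 := by
      have := sq_abs x; linarith
    have h3 : |v| * (sa^2 * |cx - 1|) ≤ |v| * ((121/50) * |v|^2) :=
      mul_le_mul_of_nonneg_left (by linarith) hv0
    have h4 : |v| * |v|^2 ≤ (1/10) * |v|^2 := by nlinarith [hv3]
    nlinarith [h3, h4]
  have t3 : |v * (sa * ca) * sx| ≤ (11/20) * |v|^2 := by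
    have e : |v * (sa * ca) * sx| = |v| * |sa * ca| * |sx| := by
      rw [abs_mul, abs_mul]
    rw [e]
    have i1 : |sa * ca| * |sx| ≤ (1/2) * ((11/10) * |v|) :=
      mul_le_mul hsaca hA (abs_nonneg sx) (by norm_num)
    have i2 := mul_le_mul_of_nonneg_left i1 hv0
    nlinarith [i2]
  have hdecomp : x - v * sa^2
      = (x - sx) + (v * sa^2 * (cx - 1) + v * (sa * ca) * sx) := by
    linear_combination hstar'
  have hfin : |x - v * sa^2| ≤ 2 * |v|^2 := by
    calc |x - v * sa^2|
        = |(x - sx) + (v * sa^2 * (cx - 1) + v * (sa * ca) * sx)| := by rw [hdecomp]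
      _ ≤ |x - sx| + |v * sa^2 * (cx - 1) + v * (sa * ca) * sx| := abs_add_le _ _
      _ ≤ |x - sx| + (|v * sa^2 * (cx - 1)| + |v * (sa * ca) * sx|) := by
          linarith [abs_add_le (v * sa^2 * (cx - 1)) (v * (sa * ca) * sx)]
      _ ≤ 2 * |v|^2 := by linarith [pow_nonneg hv0 2]
  have := sq_abs v
  linarith

/-- The master Prüfer recursion: `sin(πk)·sin(πδ) = V(n)·sin(πθ(n))·sin(πθ(n)+πδ)`
where `δ = θ(n+1) - θ(n) - k`. -/
private lemma prufer_master (E k : ℝ) (hk : k ∈ Set.Ioo (0 : ℝ) 1)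
    (hEk : E = 2 * Real.cos (Real.pi * k))
    (V u R θ : ℕ → ℝ) (hEig : EigenEq V E u) (hPruf : PruferRel k u R θ)
    (n : ℕ) (hn : 1 ≤ n) :
    Real.sin (Real.pi * k) * Real.sin (Real.pi * (θ (n+1) - θ n - k))
      = V n * Real.sin (Real.pi * θ n)
          * Real.sin (Real.pi * θ n + Real.pi * (θ (n+1) - θ n - k)) := by
  obtain ⟨hk0, hk1⟩ := hk
  have hpi := Real.pi_pos
  have hs : 0 < Real.sin (Real.pi * k) :=
    Real.sin_pos_of_pos_of_lt_pi (by positivity) (by nlinarith)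
  obtain ⟨hR1, hu1, hu2⟩ := hPruf n hn
  obtain ⟨hR2, hu1', hu2'⟩ := hPruf (n+1) (by omega)
  simp only [Nat.add_sub_cancel] at hu1' hu2'
  have hun : u n = R n * Real.sin (Real.pi * θ n) := by
    rw [div_eq_iff hs.ne'] at hu2
    rw [hu1] at hu2
    have h : Real.sin (Real.pi * θ n)
        = Real.sin (Real.pi * θ n - Real.pi * k) * Real.cos (Real.pi * k)
          + Real.cos (Real.pi * θ n - Real.pi * k) * Real.sin (Real.pi * k) := by
      rw [← Real.sin_add]; ring_nf
    rw [h]; linarith [hu2]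
  have hun1 : u (n+1) = R (n+1) * Real.sin (Real.pi * θ (n+1)) := by
    rw [div_eq_iff hs.ne'] at hu2'
    rw [hu1'] at hu2'
    have h : Real.sin (Real.pi * θ (n+1))
        = Real.sin (Real.pi * θ (n+1) - Real.pi * k) * Real.cos (Real.pi * k)
          + Real.cos (Real.pi * θ (n+1) - Real.pi * k) * Real.sin (Real.pi * k) := by
      rw [← Real.sin_add]; ring_nf
    rw [h]; linarith [hu2']
  have hE2 := hEig n hn
  rw [hEk, hun, hun1, hu1] at hE2
  rw [hun] at hu1'
  have hEq2 : R (n+1) * Real.sin (Real.pi * θ (n+1))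
      = R n * (Real.sin (Real.pi * θ n + Real.pi * k)
          - V n * Real.sin (Real.pi * θ n)) := by
    have hid : Real.sin (Real.pi * θ n + Real.pi * k)
        = 2 * Real.cos (Real.pi * k) * Real.sin (Real.pi * θ n)
          - Real.sin (Real.pi * θ n - Real.pi * k) := by
      rw [Real.sin_add, Real.sin_sub]; ring
    rw [hid]; linarith [hE2]
  have hM : Real.sin (Real.pi * θ (n+1)) * Real.sin (Real.pi * θ n)
      = Real.sin (Real.pi * θ (n+1) - Real.pi * k)
        * (Real.sin (Real.pi * θ n + Real.pi * k)
            - V n * Real.sin (Real.pi * θ n)) := by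
    have hkey : (R (n+1) * Real.sin (Real.pi * θ (n+1)))
          * (R n * Real.sin (Real.pi * θ n))
        = (R (n+1) * Real.sin (Real.pi * θ (n+1) - Real.pi * k))
            * (R n * (Real.sin (Real.pi * θ n + Real.pi * k)
                - V n * Real.sin (Real.pi * θ n))) := by
      rw [hEq2, ← hu1']; ring
    have hRR : (0:ℝ) < R (n+1) * R n := mul_pos hR2 hR1
    field_simp at hkey ⊢
    nlinarith [hkey, hRR]
  set a := Real.pi * θ n with ha
  set x := Real.pi * (θ (n+1) - θ n - k) with hx
  have e1 : Real.pi * θ (n+1) - Real.pi * k = a + x := by rw [ha, hx]; ring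
  have e2 : Real.pi * θ (n+1) = a + Real.pi * k + x := by rw [ha, hx]; ring
  rw [e1, e2] at hM
  simp only [Real.sin_add, Real.cos_add] at hM ⊢
  linear_combination (-1 : ℝ) * hM
    - Real.sin x * Real.sin (Real.pi * k) * (Real.sin_sq_add_cos_sq a)


/-- Quantitative analysis of the master equation. -/
private lemma prufer_analysis (s w a x : ℝ) (hs : 0 < s)
    (hv : |w / s| < 1/10) (hx : |x| < Real.pi/2)
    (hstar : s * Real.sin x = w * Real.sin a * Real.sin (a + x)) :
    |x / Real.pi - (Real.sin a)^2 * w / (Real.pi * s)| ≤ 10 * w^2 / s^2 := by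
  have hpi := Real.pi_pos
  have hstar' : Real.sin x
      = (w/s) * Real.sin a * Real.sin a * Real.cos x
        + (w/s) * Real.sin a * Real.cos a * Real.sin x := by
    rw [Real.sin_add] at hstar
    field_simp
    linear_combination hstar
  have hjordan : 2 * |x| ≤ Real.pi * |Real.sin x| := by
    have hJ := Real.mul_abs_le_abs_sin hx.le
    have h2 := mul_le_mul_of_nonneg_left hJ hpi.le
    have e : Real.pi * (2 / Real.pi * |x|) = 2 * |x| := by field_simp
    linarith
  have hcx1 : |Real.cos x - 1| ≤ x^2/2 := by
    have h1 : 1 - x^2/2 ≤ Real.cos x := Real.one_sub_sq_div_two_le_cos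
    have h2 : Real.cos x ≤ 1 := Real.cos_le_one x
    rw [abs_le]; constructor <;> linarith
  have habs := prufer_arith (w/s) (Real.sin a) (Real.cos a) (Real.sin x) (Real.cos x) x
    (Real.sin_sq_add_cos_sq a) (Real.abs_cos_le_one x) hv hstar' hjordan
    Real.pi_le_four (prufer_aux1 hx) hcx1
  have hEq : x / Real.pi - (Real.sin a)^2 * w / (Real.pi * s)
      = (x - (w/s) * (Real.sin a)^2) / Real.pi := by
    field_simp
  rw [hEq, abs_div, abs_of_pos hpi]
  have hvw : w^2/s^2 = (w/s)^2 := (div_pow w s 2).symm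
  rw [div_le_iff₀ hpi,
    show 10 * w^2 / s^2 * Real.pi = 10 * Real.pi * (w/s)^2 from by ring]
  nlinarith [habs, Real.pi_gt_three, sq_nonneg (w/s)]

/-- Second-order expansion of the Prüfer angle increment: if `|V(n)/sin(πk)| < 1/10`
then `θ(n+1) = θ(n) + k + sin²(πθ(n))·V(n)/(π·sin(πk)) + O(V(n)²/sin²(πk))`
with an absolute constant in the `O`. -/
theorem prufer_angle_second_order : ∃ C : ℝ, 0 < C ∧
    ∀ (E k : ℝ), E ∈ Set.Ioo (-2 : ℝ) 2 → k ∈ Set.Ioo (0 : ℝ) 1 →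
      E = 2 * Real.cos (Real.pi * k) →
    ∀ (V u R θ : ℕ → ℝ), u ≠ 0 → EigenEq V E u → PruferRel k u R θ → BranchCond k θ →
    ∀ n : ℕ, 1 ≤ n → |V n / Real.sin (Real.pi * k)| < 1 / 10 →
      |θ (n + 1) - θ n - k
          - (Real.sin (Real.pi * θ n)) ^ 2 * V n / (Real.pi * Real.sin (Real.pi * k))|
        ≤ C * (V n) ^ 2 / (Real.sin (Real.pi * k)) ^ 2 := by
  refine ⟨10, by norm_num, ?_⟩
  intro E k hE hk hEk V u R θ hu hEig hPruf hBranch n hn hV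
  have hpi := Real.pi_pos
  obtain ⟨hk0, hk1⟩ := hk
  have hs : 0 < Real.sin (Real.pi * k) :=
    Real.sin_pos_of_pos_of_lt_pi (by positivity) (by nlinarith)
  have hstar := prufer_master E k ⟨hk0, hk1⟩ hEk V u R θ hEig hPruf n hn
  have hxlt : |Real.pi * (θ (n+1) - θ n - k)| < Real.pi / 2 := by
    rw [abs_mul, abs_of_pos hpi]
    have := hBranch n hn
    nlinarith
  have key := prufer_analysis (Real.sin (Real.pi * k)) (V n) (Real.pi * θ n)
    (Real.pi * (θ (n+1) - θ n - k)) hs hV hxlt hstar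
  have heq : Real.pi * (θ (n+1) - θ n - k) / Real.pi = θ (n+1) - θ n - k := by
    field_simp
  rw [heq] at key
  exact key
end
end

section
/- Let k ∈ (0,1), L ∈ ℕ, N ∈ ℕ, b ∈ ℕ, and K > 10⁸·π·N. Then there exists C > 0 (depending on k, N, K) such that the following holds for all n₀ ∈ ℕ with n₀ - b ≥ C. Suppose F : ℕ → (0,∞) and φ : ℕ → ℝ satisfy, for every m ∈ ℕ: ln F(n₀+(m+1)N)² = ln F(n₀+mN)² - (K/(2(n₀+mN-b)·sin(πk)))·(1 - cos(2πφ(n₀+mN)) + δ(m)) and φ(n₀+(m+1)N) = φ(n₀+mN) + L + (K/((n₀+mN-b)·π·sin(πk)))·(100 + ε(m)), where |δ(m)| ≤ sin(πk)/10⁴ and |ε(m)| < 1 for all m. Then for every m ∈ ℕ, F(n₀+mN) ≤ 1.5·F(n₀)·((n₀-b+mN)/(n₀-b))^{-100}. -/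
lemma sin_step_aux (a h : ℝ) (h0 : 0 ≤ h) (h1 : h ≤ 1) :
    h * Real.cos a - h ^ 2 ≤ Real.sin (a + h) - Real.sin a := by
  rcases eq_or_lt_of_le h0 with rfl | hpos
  · simp
  have hs1 : Real.sin h ≤ h := Real.sin_le h0
  have hs2 : h - h ^ 3 / 4 < Real.sin h := by
    have := Real.sin_gt_sub_cube hpos
    nlinarith [pow_pos hpos 3]
  have hc : 1 - h ^ 2 / 2 ≤ Real.cos h := Real.one_sub_sq_div_two_le_cos
  have hch : Real.cos h ≤ 1 := Real.cos_le_one h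
  rw [Real.sin_add]
  nlinarith [Real.neg_one_le_sin a, Real.sin_le_one a, Real.neg_one_le_cos a,
    Real.cos_le_one a, mul_nonneg (mul_nonneg h0 h0) h0,
    mul_nonneg (sub_nonneg.2 (Real.sin_le_one a)) (sub_nonneg.2 hch),
    mul_nonneg (sub_nonneg.2 (Real.cos_le_one a)) (le_of_lt (sub_pos.2 hs2)),
    sq_nonneg h]

lemma sum_cos_lb (q t : ℕ → ℝ) (η : ℝ) (hq : ∀ j, q (j+1) = q j + t j)
    (ht0 : ∀ j, 0 ≤ t j) (htη : ∀ j, t j ≤ η) (hη : 2*Real.pi*η ≤ 1/2) (m : ℕ) :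
    (1/2) * (∑ j ∈ Finset.range m, t j) - 1/Real.pi
      ≤ ∑ j ∈ Finset.range m, t j * (1 - Real.cos (2*Real.pi*q j)) := by
  have hπ := Real.pi_pos
  set G : ℝ → ℝ := fun x => x - Real.sin (2*Real.pi*x)/(2*Real.pi) with hG
  clear_value G
  have step : ∀ j, G (q (j+1)) - G (q j)
      ≤ t j * (1 - Real.cos (2*Real.pi*q j)) + 2*Real.pi*(t j)^2 := by
    intro j
    have h0 : 0 ≤ 2*Real.pi*t j := mul_nonneg (by positivity) (ht0 j)
    have h1 : 2*Real.pi*t j ≤ 1 := by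
      have : 2*Real.pi*t j ≤ 2*Real.pi*η :=
        mul_le_mul_of_nonneg_left (htη j) (by positivity)
      linarith
    have key := sin_step_aux (2*Real.pi*q j) (2*Real.pi*t j) h0 h1
    have harg : 2*Real.pi*(q j + t j) = 2*Real.pi*q j + 2*Real.pi*t j := by ring
    rw [hq j]
    simp only [hG, harg]
    have goal' : (Real.sin (2*Real.pi*q j) - Real.sin (2*Real.pi*q j + 2*Real.pi*t j))/(2*Real.pi)
        ≤ 2*Real.pi*(t j)^2 - t j * Real.cos (2*Real.pi*q j) := by
      rw [div_le_iff₀ (by positivity)]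
      nlinarith [key]
    have expand : (q j + t j - Real.sin (2*Real.pi*q j + 2*Real.pi*t j)/(2*Real.pi))
        - (q j - Real.sin (2*Real.pi*q j)/(2*Real.pi))
        = t j + (Real.sin (2*Real.pi*q j) - Real.sin (2*Real.pi*q j + 2*Real.pi*t j))/(2*Real.pi) := by
      ring
    rw [expand]
    linarith
  have tele : ∑ j ∈ Finset.range m, (G (q (j+1)) - G (q j)) = G (q m) - G (q 0) :=
    Finset.sum_range_sub (fun j => G (q j)) m
  have teleq : ∑ j ∈ Finset.range m, t j = q m - q 0 := by
    rw [Finset.sum_congr rfl (fun j _ => show t j = q (j+1) - q j by rw [hq j]; ring)]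
    exact Finset.sum_range_sub (fun j => q j) m
  have hsum1 : G (q m) - G (q 0) ≤ ∑ j ∈ Finset.range m, (t j * (1 - Real.cos (2*Real.pi*q j)) + 2*Real.pi*(t j)^2) := by
    rw [← tele]; exact Finset.sum_le_sum (fun j _ => step j)
  rw [Finset.sum_add_distrib] at hsum1
  have hsq : ∑ j ∈ Finset.range m, 2*Real.pi*(t j)^2 ≤ (1/2) * ∑ j ∈ Finset.range m, t j := by
    have h1 : ∑ j ∈ Finset.range m, 2*Real.pi*(t j)^2 ≤ (2*Real.pi*η) * ∑ j ∈ Finset.range m, t j := by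
      rw [Finset.mul_sum]
      refine Finset.sum_le_sum (fun j _ => ?_)
      nlinarith [Real.pi_pos, ht0 j, htη j,
        mul_nonneg (mul_nonneg Real.pi_pos.le (ht0 j)) (sub_nonneg.2 (htη j))]
    have h2 : (2*Real.pi*η) * ∑ j ∈ Finset.range m, t j ≤ (1/2) * ∑ j ∈ Finset.range m, t j := by
      apply mul_le_mul_of_nonneg_right hη
      exact Finset.sum_nonneg (fun j _ => ht0 j)
    linarith
  have hGlb : (∑ j ∈ Finset.range m, t j) - 1/Real.pi ≤ G (q m) - G (q 0) := by
    have hs1 : Real.sin (2*Real.pi*q m) ≤ 1 := Real.sin_le_one _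
    have hs2 : -1 ≤ Real.sin (2*Real.pi*q 0) := Real.neg_one_le_sin _
    have hGe : G (q m) - G (q 0) = (q m - q 0)
        - (Real.sin (2*Real.pi*q m) - Real.sin (2*Real.pi*q 0))/(2*Real.pi) := by
      simp only [hG]; ring
    rw [hGe, teleq]
    have : (Real.sin (2*Real.pi*q m) - Real.sin (2*Real.pi*q 0))/(2*Real.pi) ≤ 1/Real.pi := by
      rw [div_le_iff₀ (by positivity)]
      have : (1:ℝ)/Real.pi * (2*Real.pi) = 2 := by field_simp
      rw [this]; linarith
    linarith
  linarith


set_option maxHeartbeats 2000000 in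
/-- Key iteration lemma (Lemma 3.1): if `ln F²` decreases according to the stated
recursion driven by the phase `φ`, which in turn drifts by `L` plus a positive
logarithmic term per block of length `N`, then `F` decays polynomially of rate `100`
along the arithmetic progression `n₀ + mN`. -/
theorem key_iteration_lemma (k : ℝ) (hk : k ∈ Set.Ioo (0 : ℝ) 1)
    (L N b : ℕ) (hN : 0 < N) (K : ℝ) (hK : K > 10 ^ 8 * Real.pi * (N : ℝ)) :
    ∃ C : ℝ, 0 < C ∧ ∀ n₀ : ℕ, (n₀ : ℝ) - (b : ℝ) ≥ C →
      ∀ F φ δ ε : ℕ → ℝ,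
        (∀ n : ℕ, 0 < F n) →
        (∀ m : ℕ, |δ m| ≤ Real.sin (Real.pi * k) / 10 ^ 4) →
        (∀ m : ℕ, |ε m| < 1) →
        (∀ m : ℕ, Real.log ((F (n₀ + (m + 1) * N)) ^ 2)
            = Real.log ((F (n₀ + m * N)) ^ 2)
              - K / (2 * ((n₀ : ℝ) + (m : ℝ) * (N : ℝ) - (b : ℝ)) * Real.sin (Real.pi * k))
                * (1 - Real.cos (2 * Real.pi * φ (n₀ + m * N)) + δ m)) →
        (∀ m : ℕ, φ (n₀ + (m + 1) * N)
            = φ (n₀ + m * N) + (L : ℝ)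
              + K / (((n₀ : ℝ) + (m : ℝ) * (N : ℝ) - (b : ℝ)) * Real.pi * Real.sin (Real.pi * k))
                * (100 + ε m)) →
        ∀ m : ℕ, F (n₀ + m * N)
          ≤ 1.5 * F n₀
            * ((((n₀ : ℝ) - (b : ℝ) + (m : ℝ) * (N : ℝ)) / ((n₀ : ℝ) - (b : ℝ))) ^ (-(100 : ℝ))) := by
  obtain ⟨hk0, hk1⟩ := hk
  have hπ := Real.pi_pos
  have hπ3 := Real.pi_gt_three
  set s := Real.sin (Real.pi * k) with hs
  clear_value s
  have hs0 : 0 < s := by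
    rw [hs]; exact Real.sin_pos_of_pos_of_lt_pi (by positivity) (by nlinarith)
  have hs1 : s ≤ 1 := by rw [hs]; exact Real.sin_le_one _
  have hN1 : (1:ℝ) ≤ (N:ℝ) := by exact_mod_cast hN
  have hK0 : 0 < K := lt_trans (by positivity) hK
  refine ⟨1000 * K / s, by positivity, ?_⟩
  intro n₀ hd F φ δ ε hF hδ hε hlog hφ
  set d : ℝ := (n₀:ℝ) - (b:ℝ) with hd'
  clear_value d
  have hd0 : 0 < d := lt_of_lt_of_le (by positivity) hd
  have hds : 1000 * K ≤ d * s := (div_le_iff₀ hs0).1 hd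
  set W : ℕ → ℝ := fun j => (n₀:ℝ) + (j:ℝ)*(N:ℝ) - (b:ℝ) with hW
  clear_value W
  have hWd : ∀ j : ℕ, d ≤ W j := by
    intro j
    have h1 : (0:ℝ) ≤ (j:ℝ)*(N:ℝ) := by positivity
    simp only [hW, hd']
    linarith
  have hW0 : ∀ j, 0 < W j := fun j => lt_of_lt_of_le hd0 (hWd j)
  have hWsucc : ∀ j : ℕ, W (j+1) = W j + (N:ℝ) := by
    intro j; simp only [hW]; push_cast; ring
  set T : ℕ → ℝ := fun j => K / (W j * Real.pi * s) * (100 + ε j) with hT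
  clear_value T
  have hε99 : ∀ j, 99 ≤ 100 + ε j ∧ 100 + ε j ≤ 101 := by
    intro j
    have h := abs_lt.1 (hε j)
    exact ⟨by linarith [h.1], by linarith [h.2]⟩
  have hTden : ∀ j, 0 < W j * Real.pi * s := fun j => mul_pos (mul_pos (hW0 j) hπ) hs0
  have hT0 : ∀ j, 0 ≤ T j := by
    intro j
    simp only [hT]
    exact mul_nonneg (div_pos hK0 (hTden j)).le (by linarith [(hε99 j).1])
  set η : ℝ := 101 * K / (d * Real.pi * s) with hη'
  clear_value η
  have hTη : ∀ j, T j ≤ η := by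
    intro j
    have h1 : T j ≤ K / (W j * Real.pi * s) * 101 := by
      simp only [hT]
      exact mul_le_mul_of_nonneg_left (hε99 j).2 (div_pos hK0 (hTden j)).le
    have h2 : K / (W j * Real.pi * s) ≤ K / (d * Real.pi * s) := by
      apply div_le_div_of_nonneg_left hK0.le (by positivity)
      exact mul_le_mul_of_nonneg_right (mul_le_mul_of_nonneg_right (hWd j) hπ.le) hs0.le
    have h3 : K / (d * Real.pi * s) * 101 = η := by rw [hη']; ring
    have h4 := mul_le_mul_of_nonneg_right h2 (by norm_num : (0:ℝ) ≤ 101)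
    linarith
  have hηb : 2 * Real.pi * η ≤ 1/2 := by
    have h1 : η ≤ 101 / (1000 * Real.pi) := by
      rw [hη']
      rw [div_le_div_iff₀ (by positivity) (by positivity)]
      nlinarith [mul_le_mul_of_nonneg_right hds hπ.le]
    have h2 : 2 * Real.pi * η ≤ 2 * Real.pi * (101 / (1000 * Real.pi)) :=
      mul_le_mul_of_nonneg_left h1 (by positivity)
    have h3 : 2 * Real.pi * (101 / (1000 * Real.pi)) = 202 / 1000 := by
      field_simp
      ring
    linarith
  set q : ℕ → ℝ := fun j => φ (n₀ + j * N) - (j:ℝ) * (L:ℝ) with hq'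
  clear_value q
  have hq : ∀ j, q (j+1) = q j + T j := by
    intro j
    simp only [hq', hT, hW]
    rw [hφ j]
    push_cast
    ring
  have hcos : ∀ j, Real.cos (2 * Real.pi * φ (n₀ + j * N)) = Real.cos (2 * Real.pi * q j) := by
    intro j
    have harg : 2 * Real.pi * φ (n₀ + j * N)
        = 2 * Real.pi * q j + ((j * L : ℤ) : ℝ) * (2 * Real.pi) := by
      simp only [hq']; push_cast; ring
    rw [harg, Real.cos_add_int_mul_two_pi]
  intro m
  -- the cumulative sum formula
  have hsum : ∀ n : ℕ, Real.log ((F (n₀ + n * N)) ^ 2)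
      = Real.log ((F n₀) ^ 2) - ∑ j ∈ Finset.range n,
          K / (2 * W j * s) * (1 - Real.cos (2 * Real.pi * q j) + δ j) := by
    intro n
    induction n with
    | zero => simp
    | succ n ih =>
        rw [hlog n, ih, hcos n, Finset.sum_range_succ]
        simp only [hW]
        ring
  -- abbreviations for the sums
  set Wsum : ℝ := ∑ j ∈ Finset.range m, 1 / W j with hWsum'
  set Tsum : ℝ := ∑ j ∈ Finset.range m, T j with hTsum'
  set TFsum : ℝ := ∑ j ∈ Finset.range m, T j * (1 - Real.cos (2 * Real.pi * q j)) with hTFsum'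
  set S : ℝ := ∑ j ∈ Finset.range m,
      K / (2 * W j * s) * (1 - Real.cos (2 * Real.pi * q j) + δ j) with hS'
  have hWsum0 : 0 ≤ Wsum := Finset.sum_nonneg (fun j _ => one_div_nonneg.2 (hW0 j).le)
  -- Step 1 : termwise lower bound for S
  have hS1 : Real.pi / 202 * TFsum - K / (2 * 10 ^ 4) * Wsum ≤ S := by
    have hterm : ∀ j ∈ Finset.range m,
        Real.pi / 202 * (T j * (1 - Real.cos (2 * Real.pi * q j))) - K / (2 * 10 ^ 4) * (1 / W j)
          ≤ K / (2 * W j * s) * (1 - Real.cos (2 * Real.pi * q j) + δ j) := by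
      intro j _
      have hWj := hW0 j
      have hWne := hWj.ne'
      have hc : 0 < K / (2 * W j * s) := div_pos hK0 (mul_pos (mul_pos two_pos hWj) hs0)
      have hf0 : 0 ≤ 1 - Real.cos (2 * Real.pi * q j) := by
        linarith [Real.cos_le_one (2 * Real.pi * q j)]
      -- bound on the cosine part
      have h1 : Real.pi / 202 * (T j * (1 - Real.cos (2 * Real.pi * q j)))
          ≤ K / (2 * W j * s) * (1 - Real.cos (2 * Real.pi * q j)) := by
        have hTle : T j ≤ K / (W j * Real.pi * s) * 101 := by
          simp only [hT]
          exact mul_le_mul_of_nonneg_left (hε99 j).2 (div_pos hK0 (hTden j)).le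
        have heq : Real.pi / 202 * (K / (W j * Real.pi * s) * 101) = K / (2 * W j * s) := by
          field_simp [hWne, hs0.ne', hπ.ne']
          ring
        have hTf := mul_le_mul_of_nonneg_right hTle hf0
        have hmono := mul_le_mul_of_nonneg_left hTf (by positivity : (0:ℝ) ≤ Real.pi / 202)
        have hrw : Real.pi / 202 * (K / (W j * Real.pi * s) * 101 * (1 - Real.cos (2 * Real.pi * q j)))
            = K / (2 * W j * s) * (1 - Real.cos (2 * Real.pi * q j)) := by
          rw [← heq]; ring
        linarith
      -- bound on the δ part
      have h2 : -(K / (2 * 10 ^ 4) * (1 / W j)) ≤ K / (2 * W j * s) * δ j := by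
        have hδj := (abs_le.1 (hδ j)).1
        have heq : K / (2 * W j * s) * (s / 10 ^ 4) = K / (2 * 10 ^ 4) * (1 / W j) := by
          field_simp [hWne, hs0.ne']
        have hm := mul_le_mul_of_nonneg_left hδj hc.le
        have hrw : K / (2 * W j * s) * (-(s / 10 ^ 4)) = -(K / (2 * 10 ^ 4) * (1 / W j)) := by
          rw [← heq]; ring
        linarith
      have hsplit : K / (2 * W j * s) * (1 - Real.cos (2 * Real.pi * q j) + δ j)
          = K / (2 * W j * s) * (1 - Real.cos (2 * Real.pi * q j)) + K / (2 * W j * s) * δ j := by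
        ring
      linarith [h1, h2]
    have h := Finset.sum_le_sum hterm
    rw [Finset.sum_sub_distrib, ← Finset.mul_sum, ← Finset.mul_sum] at h
    exact h
  -- Step 2 : lower bound for TFsum
  have hS2 : 1/2 * Tsum - 1/Real.pi ≤ TFsum :=
    sum_cos_lb q T η hq hT0 hTη hηb m
  -- Step 3 : lower bound for Tsum
  have hS3 : 99 * K / (Real.pi * s) * Wsum ≤ Tsum := by
    rw [hWsum', Finset.mul_sum]
    apply Finset.sum_le_sum
    intro j _
    have hTge : K / (W j * Real.pi * s) * 99 ≤ T j := by
      simp only [hT]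
      exact mul_le_mul_of_nonneg_left (hε99 j).1 (div_pos hK0 (hTden j)).le
    have heq : 99 * K / (Real.pi * s) * (1 / W j) = K / (W j * Real.pi * s) * 99 := by
      field_simp [(hW0 j).ne', hs0.ne', hπ.ne']
    linarith [hTge, heq.le]
  -- Step 4 : logarithmic lower bound via Wsum
  have hS5 : Real.log (W m) - Real.log (W 0) ≤ (N:ℝ) * Wsum := by
    have hstep : ∀ j ∈ Finset.range m,
        Real.log (W (j+1)) - Real.log (W j) ≤ (N:ℝ) * (1 / W j) := by
      intro j _
      have h1 : Real.log (W (j+1)) - Real.log (W j) = Real.log (W (j+1) / W j) :=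
        (Real.log_div (hW0 (j+1)).ne' (hW0 j).ne').symm
      have h2 : Real.log (W (j+1) / W j) ≤ W (j+1) / W j - 1 :=
        Real.log_le_sub_one_of_pos (div_pos (hW0 (j+1)) (hW0 j))
      have h3 : W (j+1) / W j - 1 = (N:ℝ) * (1 / W j) := by
        rw [hWsucc j]
        field_simp [(hW0 j).ne']
        ring
      linarith
    have h := Finset.sum_le_sum hstep
    rw [Finset.sum_range_sub (fun j => Real.log (W j)), ← Finset.mul_sum] at h
    exact h
  have hW0d : W 0 = d := by simp [hW, hd']
  have hΛ0 : 0 ≤ Real.log (W m) - Real.log d := by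
    have : Real.log d ≤ Real.log (W m) := Real.log_le_log hd0 (hWd m)
    linarith
  -- numeric: log 1.5 ≥ 1/3
  have hlog15 : (1:ℝ)/3 ≤ Real.log 1.5 := by
    have h2 : Real.log ((1.5:ℝ)⁻¹) ≤ (1.5:ℝ)⁻¹ - 1 := Real.log_le_sub_one_of_pos (by norm_num)
    rw [Real.log_inv] at h2
    have h3 : ((1.5:ℝ)⁻¹ : ℝ) - 1 = -(1/3) := by norm_num
    linarith
  -- main estimate
  have hmain : 200 * (Real.log (W m) - Real.log d) - 2 * Real.log 1.5 ≤ S := by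
    have e1 : Real.pi / 202 * (1/2 * Tsum - 1/Real.pi) ≤ Real.pi / 202 * TFsum :=
      mul_le_mul_of_nonneg_left hS2 (by positivity)
    have e2 : Real.pi / 202 * (1/2 * (99 * K / (Real.pi * s) * Wsum) - 1/Real.pi)
        ≤ Real.pi / 202 * (1/2 * Tsum - 1/Real.pi) := by
      apply mul_le_mul_of_nonneg_left _ (by positivity)
      linarith
    have e3 : Real.pi / 202 * (1/2 * (99 * K / (Real.pi * s) * Wsum) - 1/Real.pi)
        = 99 * K / (404 * s) * Wsum - 1/202 := by
      field_simp
      ring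
    have h404 : 99 * K / 404 ≤ 99 * K / (404 * s) := by
      apply div_le_div_of_nonneg_left (by positivity) (by positivity)
      linarith
    have hKN : 3 * 10 ^ 8 * (N:ℝ) < K := by
      have hπN : 3 * (N:ℝ) ≤ Real.pi * (N:ℝ) :=
        mul_le_mul_of_nonneg_right hπ3.le (by positivity)
      calc 3 * 10 ^ 8 * (N:ℝ) = 10 ^ 8 * (3 * (N:ℝ)) := by ring
        _ ≤ 10 ^ 8 * (Real.pi * (N:ℝ)) :=
            mul_le_mul_of_nonneg_left hπN (by norm_num)
        _ = 10 ^ 8 * Real.pi * (N:ℝ) := by ring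
        _ < K := hK
    have e4 : 200 * (N:ℝ) ≤ 99 * K / (404 * s) - K / (2 * 10 ^ 4) := by
      linarith
    have e5 : 200 * (N:ℝ) * Wsum ≤ (99 * K / (404 * s) - K / (2 * 10 ^ 4)) * Wsum :=
      mul_le_mul_of_nonneg_right e4 hWsum0
    have e5' : (99 * K / (404 * s) - K / (2 * 10 ^ 4)) * Wsum
        = 99 * K / (404 * s) * Wsum - K / (2 * 10 ^ 4) * Wsum := by ring
    have e6 : Real.log (W m) - Real.log d ≤ (N:ℝ) * Wsum := by
      rw [← hW0d]; exact hS5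
    linarith [e1, e2, e3, e5, e5', e6, hlog15, hS1]
  -- convert to the desired inequality
  have hFm := hF (n₀ + m * N)
  have hF0 := hF n₀
  have hglb : Real.log ((F (n₀ + m * N)) ^ 2)
      ≤ Real.log ((F n₀) ^ 2) - 200 * (Real.log (W m) - Real.log d) + 2 * Real.log 1.5 := by
    rw [hsum m]
    linarith [hmain]
  rw [Real.log_pow, Real.log_pow] at hglb
  push_cast at hglb
  have hWm : W m = d + (m:ℝ) * (N:ℝ) := by
    simp only [hW, hd']
    ring
  have hnum : 0 < d + (m:ℝ) * (N:ℝ) := by rw [← hWm]; exact hW0 m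
  have hrpos : 0 < (d + (m:ℝ) * (N:ℝ)) / d := div_pos hnum hd0
  have hrhs0 : 0 < 1.5 * F n₀ * ((d + (m:ℝ) * (N:ℝ)) / d) ^ (-(100:ℝ)) := by
    have := Real.rpow_pos_of_pos hrpos (-(100:ℝ))
    nlinarith
  have hlogr : Real.log ((d + (m:ℝ) * (N:ℝ)) / d) = Real.log (W m) - Real.log d := by
    rw [Real.log_div hnum.ne' hd0.ne', hWm]
  have hlogF : Real.log (F (n₀ + m * N))
      ≤ Real.log (1.5 * F n₀ * ((d + (m:ℝ) * (N:ℝ)) / d) ^ (-(100:ℝ))) := by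
    rw [Real.log_mul (by positivity) (Real.rpow_pos_of_pos hrpos _).ne',
      Real.log_mul (by norm_num) hF0.ne', Real.log_rpow hrpos, hlogr]
    linarith
  calc F (n₀ + m * N) = Real.exp (Real.log (F (n₀ + m * N))) := (Real.exp_log hFm).symm
    _ ≤ Real.exp (Real.log (1.5 * F n₀ * ((d + (m:ℝ) * (N:ℝ)) / d) ^ (-(100:ℝ)))) :=
        Real.exp_le_exp.2 hlogF
    _ = 1.5 * F n₀ * ((d + (m:ℝ) * (N:ℝ)) / d) ^ (-(100:ℝ)) := Real.exp_log hrhs0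
end

section
/- Let E ∈ (-2,2) with E = 2cos(πk), k ∈ (0,1), let b ∈ ℕ and K > 0, and let V : ℕ → ℝ satisfy |V(n)| ≤ K/(n-b) and |V(n)/sin(πk)| < 1/2 for all n > b. Let θ(n) be the Prüfer angle of a solution of u(n+1) + u(n-1) + V(n)u(n) = E·u(n). Then there exists a constant C (depending only on E and K) such that for all n > n₀ > b, |∑_{l=n₀}^{n} sin(2πθ(l))/(l-b)| ≤ C/(n₀-b). -/
noncomputable section

open Finset in
lemma my_tele {M : Type*} [AddCommGroup M] (f : ℕ → M) (m n : ℕ) (h : m ≤ n) :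
    ∑ l ∈ Finset.Icc m n, (f l - f (l + 1)) = f m - f (n + 1) := by
  induction n, h using Nat.le_induction with
  | base => simp
  | succ n hmn ih => rw [Finset.sum_Icc_succ_top (by omega), ih]; abel

lemma my_expI (x : ℝ) : ‖Complex.exp (x * Complex.I) - 1‖ ≤ |x| := by
  have hre : (Complex.exp (x * Complex.I) - 1).re = Real.cos x - 1 := by
    simp [Complex.exp_ofReal_mul_I_re]
  have him : (Complex.exp (x * Complex.I) - 1).im = Real.sin x := by
    simp [Complex.exp_ofReal_mul_I_im]
  have h1 : ‖Complex.exp (x * Complex.I) - 1‖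
      = Real.sqrt ((Real.cos x - 1) ^ 2 + Real.sin x ^ 2) := by
    rw [Complex.norm_def, Complex.normSq_apply, hre, him]
    ring_nf
  rw [h1, ← Real.sqrt_sq_eq_abs]
  apply Real.sqrt_le_sqrt
  have hc : 1 - x ^ 2 / 2 ≤ Real.cos x := Real.one_sub_sq_div_two_le_cos
  have hs : Real.sin x ^ 2 + Real.cos x ^ 2 = 1 := Real.sin_sq_add_cos_sq x
  nlinarith [Real.cos_le_one x]

set_option maxHeartbeats 1000000 in
open Real in
private lemma my_step (k : ℝ) (hk : k ∈ Set.Ioo (0:ℝ) 1)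
    (V u R θ : ℕ → ℝ) (hE : EigenEq V (2 * Real.cos (Real.pi * k)) u)
    (hP : PruferRel k u R θ) (hB : BranchCond k θ)
    (n : ℕ) (hn : 1 ≤ n) (hv : |V n / Real.sin (Real.pi * k)| < 1 / 2) :
    |θ (n + 1) - θ n - k| ≤ |V n / Real.sin (Real.pi * k)| := by
  have hs : 0 < Real.sin (π * k) := by
    apply Real.sin_pos_of_pos_of_lt_pi
    · exact mul_pos Real.pi_pos hk.1
    · nlinarith [Real.pi_pos, hk.2]
  obtain ⟨hA, hu0, hu1⟩ := hP n hn
  obtain ⟨hB2, hu0', hu1'⟩ := hP (n + 1) (by omega)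
  rw [Nat.add_sub_cancel] at hu0'
  set s := Real.sin (π * k) with hsdef
  set c := Real.cos (π * k) with hcdef
  set v := V n / s with hvdef
  have hvs : v * s = V n := div_mul_cancel₀ _ hs.ne'
  -- u m = R m * sin (π θ m)
  have sinexp : ∀ m : ℕ, Real.sin (π * θ m) =
      Real.sin (π * θ m - π * k) * c + Real.cos (π * θ m - π * k) * s := by
    intro m
    have := Real.sin_add (π * θ m - π * k) (π * k)
    rw [sub_add_cancel] at this
    exact this
  have hun : u n = R n * Real.sin (π * θ n) := by
    have h1 : u n - c * u (n - 1) = R n * Real.cos (π * θ n - π * k) * s := by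
      rw [div_eq_iff hs.ne'] at hu1; linarith [hu1]
    rw [hu0] at h1
    rw [sinexp n]; ring_nf; ring_nf at h1; linarith [h1]
  have hun1 : u (n + 1) = R (n + 1) * Real.sin (π * θ (n + 1)) := by
    have h1 : u (n + 1) - c * u n = R (n + 1) * Real.cos (π * θ (n + 1) - π * k) * s := by
      rw [Nat.add_sub_cancel, div_eq_iff hs.ne'] at hu1'; linarith [hu1']
    rw [hu0'] at h1
    rw [sinexp (n + 1)]; ring_nf; ring_nf at h1; linarith [h1]
  set α := π * θ n with hαdef
  set β := π * θ (n + 1) - π * k with hβdef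
  have he := hE n hn
  rw [hun1, hu0, hun] at he
  -- eq1 : R(n+1) sin β = R n sin α
  have eq1 : R (n + 1) * Real.sin β = R n * Real.sin α := by
    rw [← hu0', hun]
  have hβe : Real.sin (π * θ (n + 1)) = Real.sin β * c + Real.cos β * s := by
    have h := Real.sin_add β (π * k)
    rw [hβdef, sub_add_cancel] at h
    linarith [h]
  have hαe : Real.sin (α - π * k) = Real.sin α * c - Real.cos α * s :=
    Real.sin_sub α (π * k)
  rw [hβe] at he
  have eq2 : R (n + 1) * Real.cos β * s = R n * Real.cos α * s - V n * (R n * Real.sin α) := by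
    linear_combination he - R n * hαe - c * eq1
  have eq2' : R (n + 1) * Real.cos β = R n * (Real.cos α - v * Real.sin α) := by
    have h := eq2
    rw [← hvs] at h
    apply mul_right_cancel₀ hs.ne'
    linear_combination h
  have pyth : Real.sin α ^ 2 + Real.cos α ^ 2 = 1 := Real.sin_sq_add_cos_sq α
  have hsd : R (n + 1) * Real.sin (β - α) = R n * (v * Real.sin α ^ 2) := by
    have hss := Real.sin_sub β α
    linear_combination R (n + 1) * hss + Real.cos α * eq1 - Real.sin α * eq2'
  have hcd : R (n + 1) * Real.cos (β - α) = R n * (1 - v * Real.sin α * Real.cos α) := by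
    have hcs := Real.cos_sub β α
    linear_combination R (n + 1) * hcs + Real.sin α * eq1 + Real.cos α * eq2' + R n * pyth
  -- denominator bound
  have hsc : |Real.sin α * Real.cos α| ≤ 1 / 2 := by
    have h2 : Real.sin α * Real.cos α = Real.sin (2 * α) / 2 := by
      rw [Real.sin_two_mul]; ring
    rw [h2, abs_div]
    have := Real.abs_sin_le_one (2 * α)
    rw [abs_two]
    linarith
  have hden : 3 / 4 ≤ 1 - v * Real.sin α * Real.cos α := by
    have h1 : |v * (Real.sin α * Real.cos α)| ≤ 1 / 2 * (1 / 2) := by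
      rw [abs_mul]
      apply mul_le_mul hv.le hsc (abs_nonneg _) (by norm_num)
    have h2 := abs_le.mp h1
    have h3 : v * Real.sin α * Real.cos α = v * (Real.sin α * Real.cos α) := by ring
    rw [h3]
    linarith [h2.1]
  have hcos : 0 < Real.cos (β - α) := by
    have h1 : 0 < R (n + 1) * Real.cos (β - α) := by
      rw [hcd]; positivity
    by_contra hcon
    push_neg at hcon
    nlinarith
  have hbr := hB n hn
  have hδeq : β - α = π * (θ (n + 1) - θ n - k) := by rw [hβdef, hαdef]; ring
  have hπ3 := Real.pi_gt_three
  have hδabs : |β - α| < π / 2 := by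
    rw [hδeq, abs_mul, abs_of_nonneg Real.pi_pos.le]
    calc π * |θ (n + 1) - θ n - k| < π * (1 / 2) := by
          exact mul_lt_mul_of_pos_left hbr Real.pi_pos
      _ = π / 2 := by ring
  have hdpos : (0:ℝ) < 1 - v * Real.sin α * Real.cos α := by linarith
  set t := v * Real.sin α ^ 2 / (1 - v * Real.sin α * Real.cos α) with htdef
  have htan : Real.tan (β - α) = t := by
    rw [Real.tan_eq_sin_div_cos, htdef, div_eq_div_iff hcos.ne' hdpos.ne']
    apply mul_left_cancel₀ hB2.ne'
    linear_combination (1 - v * Real.sin α * Real.cos α) * hsd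
      - (v * Real.sin α ^ 2) * hcd
  have htabs : |t| ≤ |v| / (3 / 4) := by
    rw [htdef, abs_div, abs_of_pos hdpos]
    have hnum : |v * Real.sin α ^ 2| ≤ |v| := by
      rw [abs_mul, abs_of_nonneg (sq_nonneg (Real.sin α))]
      nlinarith [Real.sin_sq_le_one α, abs_nonneg v]
    exact div_le_div₀ (abs_nonneg v) hnum (by norm_num) hden
  have hle : |β - α| ≤ |Real.tan (β - α)| := by
    rcases le_or_gt 0 (β - α) with h | h
    · rw [abs_of_nonneg h]
      exact le_trans (Real.le_tan h (abs_lt.mp hδabs).2) (le_abs_self _)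
    · have h2 : -(β - α) < π / 2 := by
        have := (abs_lt.mp hδabs).1; linarith
      have h3 := Real.le_tan (by linarith : (0:ℝ) ≤ -(β - α)) h2
      rw [Real.tan_neg] at h3
      rw [abs_of_neg h]
      exact le_trans h3 (neg_le_abs _)
  have hfin : π * |θ (n + 1) - θ n - k| ≤ |v| / (3 / 4) := by
    have e1 : π * |θ (n + 1) - θ n - k| = |β - α| := by
      rw [hδeq, abs_mul, abs_of_nonneg Real.pi_pos.le]
    rw [e1]
    calc |β - α| ≤ |Real.tan (β - α)| := hle
      _ = |t| := by rw [htan]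
      _ ≤ |v| / (3 / 4) := htabs
  nlinarith [abs_nonneg v, abs_nonneg (θ (n + 1) - θ n - k), hfin, hπ3]


open Real in
lemma my_osc (k : ℝ)
    (hk : k ∈ Set.Ioo (0 : ℝ) 1)
    (b : ℕ) (K : ℝ) (hK : 0 < K) :
    ∃ C : ℝ, 0 < C ∧ ∀ θ : ℕ → ℝ,
      (∀ l : ℕ, b < l → |θ (l + 1) - θ l - k|
          ≤ (K / Real.sin (Real.pi * k)) * ((l : ℝ) - (b : ℝ))⁻¹) →
      ∀ n₀ n : ℕ, b < n₀ → n₀ < n →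
        |∑ l ∈ Finset.Icc n₀ n, Real.sin (2 * Real.pi * θ l) / ((l : ℝ) - (b : ℝ))|
          ≤ C / ((n₀ : ℝ) - (b : ℝ)) := by
  obtain ⟨hk0, hk1⟩ := hk
  have hs : 0 < Real.sin (π * k) := by
    apply Real.sin_pos_of_pos_of_lt_pi (mul_pos Real.pi_pos hk0)
    nlinarith [Real.pi_pos]
  set s := Real.sin (π * k) with hsdef
  set lam : ℂ := Complex.exp ((2 * π * k : ℝ) * Complex.I) with hlam
  have hlam1 : lam ≠ 1 := by
    rw [hlam, Ne, Complex.exp_eq_one_iff]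
    rintro ⟨m, hm⟩
    have h2 : ((2 * π * k : ℝ) : ℂ) = (((m : ℝ) * (2 * π) : ℝ) : ℂ) := by
      apply mul_right_cancel₀ Complex.I_ne_zero
      rw [hm]; push_cast; ring
    have h3 : (2 * π * k : ℝ) = (m : ℝ) * (2 * π) := by exact_mod_cast h2
    have h4 : k = (m : ℝ) := by
      apply mul_left_cancel₀ (a := 2 * π) (by positivity)
      linear_combination h3
    rw [h4] at hk0 hk1
    have : (0 : ℤ) < m := by exact_mod_cast hk0
    have : m < (1 : ℤ) := by exact_mod_cast hk1
    omega
  have hsub : (1 : ℂ) - lam ≠ 0 := sub_ne_zero.mpr (Ne.symm hlam1)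
  have hnormpos : 0 < ‖(1 - lam)⁻¹‖ := by
    rw [norm_pos_iff]
    exact inv_ne_zero hsub
  refine ⟨‖(1 - lam)⁻¹‖ * (3 + 4 * π * K / s), by positivity, ?_⟩
  intro θ hstep n₀ n hn₀ hnn
  have hb2 : (b:ℝ) + 1 ≤ n₀ := by exact_mod_cast hn₀
  have hb1 : (1:ℝ) ≤ (n₀:ℝ) - b := by linarith
  set c : ℕ → ℝ := fun l => ((l:ℝ) - b)⁻¹ with hc
  set a : ℕ → ℂ := fun l => Complex.exp ((2 * π * θ l : ℝ) * Complex.I) with ha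
  set eE : ℕ → ℂ :=
    fun l => Complex.exp ((2 * π * (θ (l + 1) - θ l - k) : ℝ) * Complex.I) with heE
  have hrec : ∀ l : ℕ, a (l + 1) = lam * a l * eE l := by
    intro l
    simp only [ha, heE, hlam, ← Complex.exp_add]
    congr 1
    push_cast
    ring
  have key : ∀ l : ℕ, (1 - lam) * a l = (a l - a (l + 1)) + lam * a l * (eE l - 1) := by
    intro l; rw [hrec l]; ring
  set g : ℕ → ℂ := fun l => a l * (c l : ℂ) with hg
  set T := ∑ l ∈ Finset.Icc n₀ n, g l with hT
  set T1 := ∑ l ∈ Finset.Icc n₀ n, (a l - a (l + 1)) * (c l : ℂ) with hT1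
  set T2 := ∑ l ∈ Finset.Icc n₀ n, lam * a l * (eE l - 1) * (c l : ℂ) with hT2
  have hsum1 : (1 - lam) * T = T1 + T2 := by
    rw [hT, Finset.mul_sum, hT1, hT2, ← Finset.sum_add_distrib]
    exact Finset.sum_congr rfl (fun l _ => by
      simp only [hg]
      linear_combination (c l : ℂ) * key l)
  have hanorm : ∀ l : ℕ, ‖a l‖ = 1 := fun l => by
    simp only [ha]; exact Complex.norm_exp_ofReal_mul_I _
  have hlamnorm : ‖lam‖ = 1 := by
    rw [hlam]; exact Complex.norm_exp_ofReal_mul_I _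
  have hcge : ∀ l : ℕ, n₀ ≤ l → 1 ≤ (l:ℝ) - b := by
    intro l hl
    have : (n₀:ℝ) ≤ l := by exact_mod_cast hl
    linarith
  have hcpos : ∀ l : ℕ, n₀ ≤ l → 0 < c l := by
    intro l hl; simp only [hc]; have := hcge l hl; positivity
  have hcsucc : ∀ l : ℕ, ((l + 1 : ℕ):ℝ) - b = ((l:ℝ) - b) + 1 := by
    intro l; push_cast; ring
  have hcmono : ∀ l : ℕ, n₀ ≤ l → c (l + 1) ≤ c l := by
    intro l hl
    simp only [hc, hcsucc l]
    have h1 := hcge l hl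
    exact inv_anti₀ (by linarith) (by linarith)
  have hgnorm : ∀ l : ℕ, n₀ ≤ l → ‖g l‖ = c l := by
    intro l hl
    simp only [hg]
    rw [norm_mul, hanorm, one_mul, Complex.norm_real, Real.norm_eq_abs,
      abs_of_pos (hcpos l hl)]
  have htel1 : ∑ l ∈ Finset.Icc n₀ n, (c l - c (l + 1)) = c n₀ - c (n + 1) :=
    my_tele c n₀ n hnn.le
  have hT1bound : ‖T1‖ ≤ 3 * c n₀ := by
    have hdecomp : T1 = (g n₀ - g (n + 1))
        + ∑ l ∈ Finset.Icc n₀ n, a (l + 1) * ((c (l + 1) : ℂ) - (c l : ℂ)) := by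
      rw [hT1, ← my_tele g n₀ n hnn.le, ← Finset.sum_add_distrib]
      exact Finset.sum_congr rfl (fun l _ => by simp only [hg]; ring)
    rw [hdecomp]
    have h1 : ‖g n₀ - g (n + 1)‖ ≤ c n₀ + c (n + 1) := by
      calc ‖g n₀ - g (n + 1)‖ ≤ ‖g n₀‖ + ‖g (n + 1)‖ := norm_sub_le _ _
        _ = c n₀ + c (n + 1) := by rw [hgnorm n₀ le_rfl, hgnorm (n + 1) (by omega)]
    have h2 : ‖∑ l ∈ Finset.Icc n₀ n, a (l + 1) * ((c (l + 1) : ℂ) - (c l : ℂ))‖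
        ≤ c n₀ - c (n + 1) := by
      calc ‖∑ l ∈ Finset.Icc n₀ n, a (l + 1) * ((c (l + 1) : ℂ) - (c l : ℂ))‖
          ≤ ∑ l ∈ Finset.Icc n₀ n, ‖a (l + 1) * ((c (l + 1) : ℂ) - (c l : ℂ))‖ :=
            norm_sum_le _ _
        _ = ∑ l ∈ Finset.Icc n₀ n, (c l - c (l + 1)) := by
            apply Finset.sum_congr rfl
            intro l hl
            have hl1 := (Finset.mem_Icc.mp hl).1
            rw [norm_mul, hanorm, one_mul]
            rw [show ((c (l + 1) : ℂ) - (c l : ℂ)) = ((c (l + 1) - c l : ℝ) : ℂ) by push_cast; ring]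
            rw [Complex.norm_real, Real.norm_eq_abs, abs_of_nonpos (by linarith [hcmono l hl1])]
            ring
        _ = c n₀ - c (n + 1) := htel1
    calc ‖(g n₀ - g (n + 1)) + ∑ l ∈ Finset.Icc n₀ n, a (l + 1) * ((c (l + 1) : ℂ) - (c l : ℂ))‖
        ≤ ‖g n₀ - g (n + 1)‖
          + ‖∑ l ∈ Finset.Icc n₀ n, a (l + 1) * ((c (l + 1) : ℂ) - (c l : ℂ))‖ := norm_add_le _ _
      _ ≤ (c n₀ + c (n + 1)) + (c n₀ - c (n + 1)) := add_le_add h1 h2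
      _ ≤ 3 * c n₀ := by have := hcpos n₀ le_rfl; linarith
  have hsq : ∀ l : ℕ, n₀ ≤ l → c l ^ 2 ≤ 2 * (c l - c (l + 1)) := by
    intro l hl
    have h1 := hcge l hl
    simp only [hc, hcsucc l]
    set x := (l:ℝ) - b with hx
    have hx0 : (0:ℝ) < x := by linarith
    have hx1 : (0:ℝ) < x + 1 := by linarith
    have e1 : x⁻¹ - (x + 1)⁻¹ = 1 / (x * (x + 1)) := by field_simp; ring
    have e2 : (x⁻¹) ^ 2 = 1 / x ^ 2 := by rw [inv_eq_one_div, div_pow, one_pow]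
    rw [e1, e2, mul_one_div, div_le_div_iff₀ (by positivity) (by positivity)]
    nlinarith
  have hsqsum : ∑ l ∈ Finset.Icc n₀ n, c l ^ 2 ≤ 2 * c n₀ := by
    calc ∑ l ∈ Finset.Icc n₀ n, c l ^ 2
        ≤ ∑ l ∈ Finset.Icc n₀ n, 2 * (c l - c (l + 1)) :=
          Finset.sum_le_sum (fun l hl => hsq l (Finset.mem_Icc.mp hl).1)
      _ = 2 * (c n₀ - c (n + 1)) := by rw [← Finset.mul_sum, htel1]
      _ ≤ 2 * c n₀ := by have := hcpos (n + 1) (by omega); linarith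
  have hT2bound : ‖T2‖ ≤ (4 * π * K / s) * c n₀ := by
    have hpt : ∀ l ∈ Finset.Icc n₀ n,
        ‖lam * a l * (eE l - 1) * (c l : ℂ)‖ ≤ (2 * π * (K / s)) * c l ^ 2 := by
      intro l hl
      obtain ⟨hl1, _⟩ := Finset.mem_Icc.mp hl
      have hbl : b < l := lt_of_lt_of_le hn₀ hl1
      have hcp := hcpos l hl1
      rw [norm_mul, norm_mul, norm_mul, hanorm, hlamnorm, one_mul, one_mul,
        Complex.norm_real, Real.norm_eq_abs, abs_of_pos hcp]
      have h3 : ‖eE l - 1‖ ≤ 2 * π * (K / s) * c l := by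
        calc ‖eE l - 1‖ ≤ |2 * π * (θ (l + 1) - θ l - k)| := my_expI _
          _ = 2 * π * |θ (l + 1) - θ l - k| := by
              rw [abs_mul, abs_of_nonneg (by positivity : (0:ℝ) ≤ 2 * π)]
          _ ≤ 2 * π * ((K / s) * c l) := by
              apply mul_le_mul_of_nonneg_left _ (by positivity)
              exact hstep l hbl
          _ = 2 * π * (K / s) * c l := by ring
      calc ‖eE l - 1‖ * c l ≤ (2 * π * (K / s) * c l) * c l :=
            mul_le_mul_of_nonneg_right h3 hcp.le
        _ = (2 * π * (K / s)) * c l ^ 2 := by ring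
    calc ‖T2‖ ≤ ∑ l ∈ Finset.Icc n₀ n, ‖lam * a l * (eE l - 1) * (c l : ℂ)‖ := by
          rw [hT2]; exact norm_sum_le _ _
      _ ≤ ∑ l ∈ Finset.Icc n₀ n, (2 * π * (K / s)) * c l ^ 2 := Finset.sum_le_sum hpt
      _ = (2 * π * (K / s)) * ∑ l ∈ Finset.Icc n₀ n, c l ^ 2 := by rw [Finset.mul_sum]
      _ ≤ (2 * π * (K / s)) * (2 * c n₀) := by
          apply mul_le_mul_of_nonneg_left hsqsum (by positivity)
      _ = (4 * π * K / s) * c n₀ := by ring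
  have hTeq : T = (1 - lam)⁻¹ * (T1 + T2) := by
    rw [← hsum1, ← mul_assoc, inv_mul_cancel₀ hsub, one_mul]
  have hTnorm : ‖T‖ ≤ ‖(1 - lam)⁻¹‖ * (3 + 4 * π * K / s) * c n₀ := by
    rw [hTeq, norm_mul]
    calc ‖(1 - lam)⁻¹‖ * ‖T1 + T2‖
        ≤ ‖(1 - lam)⁻¹‖ * (3 * c n₀ + (4 * π * K / s) * c n₀) := by
          apply mul_le_mul_of_nonneg_left _ (norm_nonneg _)
          calc ‖T1 + T2‖ ≤ ‖T1‖ + ‖T2‖ := norm_add_le _ _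
            _ ≤ 3 * c n₀ + (4 * π * K / s) * c n₀ := add_le_add hT1bound hT2bound
      _ = ‖(1 - lam)⁻¹‖ * (3 + 4 * π * K / s) * c n₀ := by ring
  have hS : ∑ l ∈ Finset.Icc n₀ n, Real.sin (2 * π * θ l) / ((l : ℝ) - (b : ℝ)) = T.im := by
    rw [hT, Complex.im_sum]
    apply Finset.sum_congr rfl
    intro l _
    simp only [hg, Complex.mul_im, Complex.ofReal_re, Complex.ofReal_im, mul_zero, zero_add,
      ha, Complex.exp_ofReal_mul_I_im]
    rw [div_eq_mul_inv]
  rw [hS]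
  have hfinal : c n₀ = ((n₀:ℝ) - (b:ℝ))⁻¹ := rfl
  calc |T.im| ≤ ‖T‖ := by exact Complex.abs_im_le_norm T
    _ ≤ ‖(1 - lam)⁻¹‖ * (3 + 4 * π * K / s) * c n₀ := hTnorm
    _ = ‖(1 - lam)⁻¹‖ * (3 + 4 * π * K / s) / ((n₀:ℝ) - (b:ℝ)) := by
        rw [hfinal]; ring


/-- Oscillatory sum estimate (Lemma 4.2, first bound): for a Prüfer angle `θ` of a
solution at energy `E = 2cos(πk)` with `|V(n)| ≤ K/(n-b)`, the weighted sums of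
`sin(2πθ(l))/(l-b)` are bounded by `C(E,K)/(n₀-b)`. -/
theorem oscillatory_sum_sin (E k : ℝ) (hE : E ∈ Set.Ioo (-2 : ℝ) 2)
    (hk : k ∈ Set.Ioo (0 : ℝ) 1) (hEk : E = 2 * Real.cos (Real.pi * k))
    (b : ℕ) (K : ℝ) (hK : 0 < K) :
    ∃ C : ℝ, 0 < C ∧ ∀ V u R θ : ℕ → ℝ,
      (∀ n : ℕ, b < n → |V n| ≤ K / ((n : ℝ) - (b : ℝ))) →
      (∀ n : ℕ, b < n → |V n / Real.sin (Real.pi * k)| < 1 / 2) →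
      u ≠ 0 → EigenEq V E u → PruferRel k u R θ → BranchCond k θ →
      ∀ n₀ n : ℕ, b < n₀ → n₀ < n →
        |∑ l ∈ Finset.Icc n₀ n, Real.sin (2 * Real.pi * θ l) / ((l : ℝ) - (b : ℝ))|
          ≤ C / ((n₀ : ℝ) - (b : ℝ)) := by
  obtain ⟨C, hC, hbound⟩ := my_osc k hk b K hK
  refine ⟨C, hC, ?_⟩
  intro V u R θ hV hVs _hune hEig hPruf hBr
  apply hbound
  intro l hl
  have hs : 0 < Real.sin (Real.pi * k) := by
    apply Real.sin_pos_of_pos_of_lt_pi (mul_pos Real.pi_pos hk.1)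
    nlinarith [Real.pi_pos, hk.2]
  have hEig' : EigenEq V (2 * Real.cos (Real.pi * k)) u := by rwa [hEk] at hEig
  have h1 := my_step k hk V u R θ hEig' hPruf hBr l (by omega) (hVs l hl)
  have hlb : (0:ℝ) < (l:ℝ) - b := by
    have : (b:ℝ) + 1 ≤ (l:ℝ) := by exact_mod_cast hl
    linarith
  have h2 : |V l / Real.sin (Real.pi * k)| = |V l| / Real.sin (Real.pi * k) := by
    rw [abs_div, abs_of_pos hs]
  calc |θ (l + 1) - θ l - k| ≤ |V l| / Real.sin (Real.pi * k) := by rw [← h2]; exact h1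
    _ ≤ (K / ((l:ℝ) - b)) / Real.sin (Real.pi * k) := by
        gcongr
        exact hV l hl
    _ = K / Real.sin (Real.pi * k) * ((l:ℝ) - (b:ℝ))⁻¹ := by
        rw [div_div, div_mul_eq_div_div, div_div]
        ring_nf
        rw [show (l:ℝ) * Real.sin (Real.pi * k) - (b:ℝ) * Real.sin (Real.pi * k)
            = ((l:ℝ) - (b:ℝ)) * Real.sin (Real.pi * k) by ring, mul_inv]
        ring

end
end

section
/- Let E, E_j ∈ (-2,2) with E = 2cos(πk), E_j = 2cos(πk_j), k, k_j ∈ (0,1), and assume E_j ≠ E and E_j ≠ -E (equivalently k + k_j ∉ ℤ and k - k_j ∉ ℤ). Let b ∈ ℕ, K > 0, and let V : ℕ → ℝ satisfy |V(n)| ≤ K/(n-b), |V(n)/sin(πk)| < 1/2, and |V(n)/sin(πk_j)| < 1/2 for all n > b. Let θ(n) and θ_j(n) be the Prüfer angles of solutions of the eigen-equations with energies E and E_j respectively. Then there exists a constant C (depending only on E, E_j and K) such that for all n > n₀ > b, |∑_{l=n₀}^{n} sin(2πθ(l))·sin(2πθ_j(l))/(l-b)| ≤ C/(n₀-b). -/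
noncomputable section

lemma trig_elim (x p d : ℝ) :
    Real.sin (x + d) * Real.sin (x + p) - Real.sin (x + p + d) * Real.sin x
      = Real.sin p * Real.sin d := by
  simp only [Real.sin_add, Real.cos_add]
  linear_combination Real.sin p * Real.sin d * Real.sin_sq_add_cos_sq x

lemma u_eq_aux (k θm um1 um Rm : ℝ) (hs : Real.sin (Real.pi * k) ≠ 0)
    (h1 : um1 = Rm * Real.sin (Real.pi * θm - Real.pi * k))
    (h2 : (um - Real.cos (Real.pi * k) * um1) / Real.sin (Real.pi * k)
      = Rm * Real.cos (Real.pi * θm - Real.pi * k)) :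
    um = Rm * Real.sin (Real.pi * θm) := by
  rw [div_eq_iff hs] at h2
  have hsin := Real.sin_add (Real.pi * θm - Real.pi * k) (Real.pi * k)
  have h3 : Real.pi * θm - Real.pi * k + Real.pi * k = Real.pi * θm := by ring
  rw [h3] at hsin
  rw [h1] at h2
  rw [hsin]
  linear_combination h2

set_option maxHeartbeats 1000000 in
/-- Prüfer angle increment estimate: `|θ(n+1) - θ(n) - k| ≤ |V n| / sin(πk)`. -/
lemma prufer_step (k : ℝ) (hk : k ∈ Set.Ioo (0:ℝ) 1) (V u R θ : ℕ → ℝ)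
    (heig : EigenEq V (2 * Real.cos (Real.pi * k)) u) (hpr : PruferRel k u R θ)
    (hbr : BranchCond k θ) (n : ℕ) (hn : 1 ≤ n) :
    |θ (n + 1) - θ n - k| ≤ |V n| / Real.sin (Real.pi * k) := by
  have hs : 0 < Real.sin (Real.pi * k) := by
    apply Real.sin_pos_of_pos_of_lt_pi
    · exact mul_pos Real.pi_pos hk.1
    · nlinarith [Real.pi_pos, hk.2]
  obtain ⟨hR, h1, h2⟩ := hpr n hn
  obtain ⟨hR', h1', h2'⟩ := hpr (n + 1) (by omega)
  simp only [Nat.add_sub_cancel] at h1' h2'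
  have hun : u n = R n * Real.sin (Real.pi * θ n) := u_eq_aux k (θ n) _ _ _ hs.ne' h1 h2
  have hun1 : u (n + 1) = R (n+1) * Real.sin (Real.pi * θ (n+1)) :=
    u_eq_aux k (θ (n+1)) _ _ _ hs.ne' h1' h2'
  set x := Real.pi * θ n with hx
  set p := Real.pi * k with hp
  set d := Real.pi * (θ (n+1) - θ n - k) with hd
  have hxd : Real.pi * θ (n+1) - Real.pi * k = x + d := by rw [hx, hd]; ring
  have hxpd : Real.pi * θ (n+1) = x + p + d := by rw [hx, hp, hd]; ring
  -- equation A : R(n+1) sin(x+d) = R n sin x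
  have eqA : R (n+1) * Real.sin (x + d) = R n * Real.sin x := by
    rw [← hxd, ← h1', hun]
  -- equation B from the eigen-equation
  have heq := heig n hn
  rw [hun1, hun, hxpd, h1] at heq
  -- key identity: sin p * sin d * R(n+1) = V n * (R n * sin x) * sin x
  have key : Real.sin p * Real.sin d * R (n+1) = V n * (R n * Real.sin x) * Real.sin x := by
    have t := trig_elim x p d
    have aux : Real.sin (x - p) = Real.sin x * Real.cos p - Real.cos x * Real.sin p :=
      Real.sin_sub x p
    have aux2 : Real.sin (x + p) = Real.sin x * Real.cos p + Real.cos x * Real.sin p :=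
      Real.sin_add x p
    linear_combination (-(R (n+1))) * t + Real.sin (x + p) * eqA - Real.sin x * heq
      + (R n * Real.sin x) * aux + (R n * Real.sin x) * aux2
  -- cancel R(n+1)
  rw [← eqA] at key
  have hcancel : Real.sin p * Real.sin d = V n * Real.sin (x + d) * Real.sin x := by
    have key2 : (Real.sin p * Real.sin d) * R (n+1)
        = (V n * Real.sin (x + d) * Real.sin x) * R (n+1) := by linear_combination key
    exact mul_right_cancel₀ hR'.ne' key2
  have habs : Real.sin p * |Real.sin d| ≤ |V n| := by
    have : |Real.sin p * Real.sin d| = |V n| * |Real.sin (x+d)| * |Real.sin x| := by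
      rw [hcancel, abs_mul, abs_mul]
    rw [abs_mul, abs_of_pos hs] at this
    rw [this]
    calc |V n| * |Real.sin (x+d)| * |Real.sin x| ≤ |V n| * 1 * 1 := by
          gcongr
          · exact Real.abs_sin_le_one _
          · exact Real.abs_sin_le_one _
      _ = |V n| := by ring
  have hbrn := hbr n hn
  have h5 : |d| = Real.pi * |θ (n+1) - θ n - k| := by
    rw [hd, abs_mul, abs_of_pos Real.pi_pos]
  have habsd : |d| ≤ Real.pi / 2 := by
    rw [h5]; nlinarith [Real.pi_pos, abs_nonneg (θ (n+1) - θ n - k)]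
  have hjor := Real.mul_abs_le_abs_sin habsd
  rw [h5] at hjor
  have hjor2 : 2 * |θ (n + 1) - θ n - k| ≤ |Real.sin d| := by
    have hpi := Real.pi_pos
    calc 2 * |θ (n + 1) - θ n - k| = 2 / Real.pi * (Real.pi * |θ (n + 1) - θ n - k|) := by
          field_simp
      _ ≤ |Real.sin d| := hjor
  rw [le_div_iff₀ hs]
  linarith [mul_le_mul_of_nonneg_left hjor2 hs.le, abs_nonneg (V n)]


/-- Abel-type bound: telescoping sum against a nonnegative antitone weight. -/
lemma abel_bound (f : ℕ → ℂ) (a : ℕ → ℝ) (m : ℕ)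
    (hf : ∀ l, m ≤ l → ‖f l‖ ≤ 1) (ha0 : ∀ l, m ≤ l → 0 ≤ a l)
    (hmono : ∀ l, m ≤ l → a (l + 1) ≤ a l) :
    ∀ n, m ≤ n → ‖∑ l ∈ Finset.Icc m n, (f (l + 1) - f l) * (a l : ℂ)‖
      ≤ 2 * a m := by
  have key : ∀ n, m ≤ n →
      ‖(∑ l ∈ Finset.Icc m n, (f (l + 1) - f l) * (a l : ℂ))
        - f (n + 1) * (a n : ℂ)‖ ≤ 2 * a m - a n := by
    intro n hn
    induction n with
    | zero =>
      have hm : m = 0 := Nat.le_zero.mp hn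
      subst hm
      simp only [Finset.Icc_self, Finset.sum_singleton]
      have : (f (0 + 1) - f 0) * ((a 0 : ℝ) : ℂ) - f (0 + 1) * ((a 0 : ℝ) : ℂ)
          = -(f 0 * ((a 0 : ℝ) : ℂ)) := by ring
      rw [this]
      rw [norm_neg, norm_mul]
      have h1 : ‖((a 0 : ℝ) : ℂ)‖ = a 0 := by
        rw [Complex.norm_real, Real.norm_eq_abs, abs_of_nonneg (ha0 0 hn)]
      rw [h1]
      nlinarith [hf 0 hn, ha0 0 hn, norm_nonneg (f 0)]
    | succ n ih =>
      rcases Nat.lt_or_ge m (n + 1) with hlt | hge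
      · have hmn : m ≤ n := by omega
        have ihn := ih hmn
        rw [Finset.sum_Icc_succ_top (by omega : m ≤ n + 1)]
        have expand : (∑ l ∈ Finset.Icc m n, (f (l + 1) - f l) * (a l : ℂ))
            + (f (n + 1 + 1) - f (n + 1)) * ((a (n + 1) : ℝ) : ℂ)
            - f (n + 1 + 1) * ((a (n + 1) : ℝ) : ℂ)
            = ((∑ l ∈ Finset.Icc m n, (f (l + 1) - f l) * (a l : ℂ))
              - f (n + 1) * (a n : ℂ)) + f (n + 1) * (((a n : ℝ) : ℂ) - ((a (n+1) : ℝ) : ℂ)) := by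
          ring
        rw [expand]
        calc ‖_‖ ≤ ‖(∑ l ∈ Finset.Icc m n, (f (l + 1) - f l) * (a l : ℂ))
              - f (n + 1) * (a n : ℂ)‖ + ‖f (n + 1) * (((a n : ℝ) : ℂ) - ((a (n+1) : ℝ) : ℂ))‖ :=
            norm_add_le _ _
          _ ≤ (2 * a m - a n) + (a n - a (n + 1)) := by
            apply add_le_add ihn
            rw [norm_mul]
            have h2 : ((a n : ℝ) : ℂ) - ((a (n+1) : ℝ) : ℂ) = ((a n - a (n+1) : ℝ) : ℂ) := by
              push_cast; ring
            rw [h2, Complex.norm_real, Real.norm_eq_abs, abs_of_nonneg (by linarith [hmono n hmn])]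
            nlinarith [hf (n+1) (by omega), norm_nonneg (f (n+1)), hmono n hmn]
          _ = 2 * a m - a (n + 1) := by ring
      · have hm : m = n + 1 := by omega
        subst hm
        simp only [Finset.Icc_self, Finset.sum_singleton]
        have : (f (n + 1 + 1) - f (n + 1)) * ((a (n + 1) : ℝ) : ℂ)
            - f (n + 1 + 1) * ((a (n + 1) : ℝ) : ℂ) = -(f (n + 1) * ((a (n + 1) : ℝ) : ℂ)) := by
          ring
        rw [this, norm_neg, norm_mul]
        rw [show ‖((a (n+1) : ℝ) : ℂ)‖ = a (n+1) by
          rw [Complex.norm_real, Real.norm_eq_abs, abs_of_nonneg (ha0 (n+1) (le_refl _))]]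
        nlinarith [hf (n+1) (le_refl _), ha0 (n+1) (le_refl _), norm_nonneg (f (n+1))]
  intro n hn
  have h := key n hn
  have htri : ‖∑ l ∈ Finset.Icc m n, (f (l + 1) - f l) * (a l : ℂ)‖
      ≤ ‖(∑ l ∈ Finset.Icc m n, (f (l + 1) - f l) * (a l : ℂ))
        - f (n + 1) * (a n : ℂ)‖ + ‖f (n + 1) * (a n : ℂ)‖ := by
    have := norm_add_le ((∑ l ∈ Finset.Icc m n, (f (l + 1) - f l) * (a l : ℂ))
        - f (n + 1) * (a n : ℂ)) (f (n + 1) * (a n : ℂ))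
    simpa using this
  have h3 : ‖f (n + 1) * (a n : ℂ)‖ ≤ a n := by
    rw [norm_mul, Complex.norm_real, Real.norm_eq_abs, abs_of_nonneg (ha0 n hn)]
    nlinarith [hf (n+1) (by omega), ha0 n hn, norm_nonneg (f (n+1))]
  linarith

/-- Sum of inverse squares tail bound. -/
lemma sq_sum_bound (b m : ℕ) (hb : b < m) :
    ∀ n, m ≤ n → ∑ l ∈ Finset.Icc m n, (1 / ((l : ℝ) - (b : ℝ)))^2
      ≤ 2 / ((m : ℝ) - (b : ℝ)) - 1 / ((n : ℝ) - (b : ℝ)) := by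
  intro n hn
  induction n with
  | zero =>
    have hm : m = 0 := Nat.le_zero.mp hn
    omega
  | succ n ih =>
    have h1 : (1 : ℝ) ≤ (m : ℝ) - (b : ℝ) := by
      have : (b : ℝ) + 1 ≤ (m : ℝ) := by exact_mod_cast hb
      linarith
    rcases Nat.lt_or_ge m (n + 1) with hlt | hge
    · have hmn : m ≤ n := by omega
      have ihn := ih hmn
      rw [Finset.sum_Icc_succ_top (by omega : m ≤ n + 1)]
      have hnb : (1 : ℝ) ≤ (n : ℝ) - (b : ℝ) := by
        have : (m : ℝ) ≤ (n : ℝ) := by exact_mod_cast hmn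
        linarith
      have hnb1 : ((n + 1 : ℕ) : ℝ) - (b : ℝ) = ((n : ℝ) - (b : ℝ)) + 1 := by push_cast; ring
      rw [hnb1]
      have hstep : (1 / (((n : ℝ) - (b : ℝ)) + 1))^2
          ≤ 1 / ((n : ℝ) - (b : ℝ)) - 1 / (((n : ℝ) - (b : ℝ)) + 1) := by
        rw [div_sub_div _ _ (by linarith : ((n : ℝ) - (b : ℝ)) ≠ 0) (by linarith : ((n : ℝ) - (b : ℝ)) + 1 ≠ 0)]
        rw [div_pow, div_le_div_iff₀ (by positivity) (by positivity)]
        nlinarith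
      linarith
    · have hm : m = n + 1 := by omega
      subst hm
      simp only [Finset.Icc_self, Finset.sum_singleton]
      have h2 : (0 : ℝ) < ((n + 1 : ℕ) : ℝ) - (b : ℝ) := by linarith
      have h3 : 2 / (((n + 1 : ℕ) : ℝ) - (b : ℝ)) - 1 / (((n + 1 : ℕ) : ℝ) - (b : ℝ))
          = 1 / (((n + 1 : ℕ) : ℝ) - (b : ℝ)) := by ring
      rw [h3, div_pow, one_pow, div_le_div_iff₀ (by positivity) h2]
      nlinarith

/-- `|e^{it} - 1| ≤ |t|` for real `t`. -/
lemma abs_exp_I_sub_one_le (t : ℝ) :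
    ‖Complex.exp ((t : ℂ) * Complex.I) - 1‖ ≤ |t| := by
  have hre : (Complex.exp ((t : ℂ) * Complex.I) - 1).re = Real.cos t - 1 := by
    simp [Complex.exp_ofReal_mul_I_re]
  have him : (Complex.exp ((t : ℂ) * Complex.I) - 1).im = Real.sin t := by
    simp [Complex.exp_ofReal_mul_I_im]
  have h2 : ‖Complex.exp ((t : ℂ) * Complex.I) - 1‖ ^ 2 ≤ |t| ^ 2 := by
    rw [Complex.sq_norm, Complex.normSq_apply, hre, him, sq_abs]
    nlinarith [Real.sin_sq_add_cos_sq t, Real.one_sub_sq_div_two_le_cos (x := t)]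
  nlinarith [norm_nonneg (Complex.exp ((t : ℂ) * Complex.I) - 1), abs_nonneg t, h2]

/-- The main oscillatory sum bound for a single phase. -/
lemma osc_sum (κ : ℝ) (b n₀ n : ℕ) (hb : b < n₀) (hn : n₀ ≤ n) (φ : ℕ → ℝ) (M : ℝ)
    (hM : 0 ≤ M)
    (hw : Complex.exp ((2 * Real.pi * κ : ℝ) * Complex.I) ≠ 1)
    (hstep : ∀ l, n₀ ≤ l → l ≤ n → |φ (l + 1) - φ l - κ| ≤ M / ((l : ℝ) - (b : ℝ))) :
    |∑ l ∈ Finset.Icc n₀ n, Real.cos (2 * Real.pi * φ l) / ((l : ℝ) - (b : ℝ))|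
      ≤ (2 + 4 * Real.pi * M)
          / ‖Complex.exp ((2 * Real.pi * κ : ℝ) * Complex.I) - 1‖
          / ((n₀ : ℝ) - (b : ℝ)) := by
  set w : ℂ := Complex.exp ((2 * Real.pi * κ : ℝ) * Complex.I) with hwdef
  set z : ℕ → ℂ := fun l => Complex.exp ((2 * Real.pi * φ l : ℝ) * Complex.I) with hzdef
  set a : ℕ → ℝ := fun l => 1 / ((l : ℝ) - (b : ℝ)) with hadef
  set Er : ℕ → ℂ :=
    fun l => z l * w * (Complex.exp ((2 * Real.pi * (φ (l + 1) - φ l - κ) : ℝ) * Complex.I) - 1)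
    with hErdef
  have hwne : w - 1 ≠ 0 := sub_ne_zero.mpr hw
  have hwpos : 0 < ‖w - 1‖ := (norm_pos_iff).mpr hwne
  have han₀ : 0 < ((n₀ : ℝ) - (b : ℝ)) := by
    have : (b : ℝ) + 1 ≤ (n₀ : ℝ) := by exact_mod_cast hb
    linarith
  have hage : ∀ l, n₀ ≤ l → (1 : ℝ) ≤ (l : ℝ) - (b : ℝ) := by
    intro l hl
    have h1 : (b : ℝ) + 1 ≤ (n₀ : ℝ) := by exact_mod_cast hb
    have h2 : (n₀ : ℝ) ≤ (l : ℝ) := by exact_mod_cast hl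
    linarith
  have hzabs : ∀ l, ‖z l‖ = 1 := fun l => Complex.norm_exp_ofReal_mul_I _
  -- step decomposition
  have hzw : ∀ l, z (l + 1) - z l = z l * (w - 1) + Er l := by
    intro l
    have hz1 : z (l + 1) = z l * w
        * Complex.exp ((2 * Real.pi * (φ (l + 1) - φ l - κ) : ℝ) * Complex.I) := by
      rw [hzdef, hwdef]
      simp only
      rw [← Complex.exp_add, ← Complex.exp_add]
      congr 1
      push_cast
      ring
    rw [hErdef]
    simp only
    rw [hz1]; ring
  -- the identity for the weighted sum
  have hiden : (w - 1) * ∑ l ∈ Finset.Icc n₀ n, z l * ((a l : ℝ) : ℂ)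
      = (∑ l ∈ Finset.Icc n₀ n, (z (l + 1) - z l) * ((a l : ℝ) : ℂ))
        - ∑ l ∈ Finset.Icc n₀ n, Er l * ((a l : ℝ) : ℂ) := by
    rw [Finset.mul_sum, ← Finset.sum_sub_distrib]
    apply Finset.sum_congr rfl
    intro l _
    rw [hzw l]; ring
  -- bound on each error term
  have hebd : ∀ l, n₀ ≤ l → l ≤ n →
      ‖Er l * ((a l : ℝ) : ℂ)‖ ≤ 2 * Real.pi * M * (a l) ^ 2 := by
    intro l hl1 hl2
    have h1 : (1 : ℝ) ≤ (l : ℝ) - (b : ℝ) := hage l hl1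
    have hal : 0 ≤ a l := by rw [hadef]; positivity
    have hexp := abs_exp_I_sub_one_le (2 * Real.pi * (φ (l + 1) - φ l - κ))
    have hεl : |φ (l + 1) - φ l - κ| ≤ M * a l := by
      have hh := hstep l hl1 hl2
      rw [hadef]
      simpa [div_eq_mul_inv, mul_comm] using hh
    have h2pi : |2 * Real.pi * (φ (l + 1) - φ l - κ)|
        = 2 * Real.pi * |φ (l + 1) - φ l - κ| := by
      rw [abs_mul, abs_of_pos (by positivity : (0:ℝ) < 2 * Real.pi)]
    rw [h2pi] at hexp
    have hkey : ‖Complex.exp ((2 * Real.pi * (φ (l + 1) - φ l - κ) : ℝ)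
        * Complex.I) - 1‖ ≤ 2 * Real.pi * (M * a l) := by
      refine hexp.trans ?_
      have hpi := Real.pi_pos
      nlinarith
    rw [hErdef]
    simp only
    rw [norm_mul, norm_mul, norm_mul, hzabs l, Complex.norm_exp_ofReal_mul_I,
      Complex.norm_real, Real.norm_eq_abs, abs_of_nonneg hal]
    calc 1 * 1 * ‖Complex.exp ((2 * Real.pi * (φ (l + 1) - φ l - κ) : ℝ)
          * Complex.I) - 1‖ * a l ≤ 1 * 1 * (2 * Real.pi * (M * a l)) * a l := by
          apply mul_le_mul_of_nonneg_right _ hal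
          simpa using hkey
      _ = 2 * Real.pi * M * a l ^ 2 := by ring
  -- bound on the error sum
  have herr : ‖∑ l ∈ Finset.Icc n₀ n, Er l * ((a l : ℝ) : ℂ)‖
      ≤ 2 * Real.pi * M * (2 * a n₀) := by
    have hstep1 : ‖∑ l ∈ Finset.Icc n₀ n, Er l * ((a l : ℝ) : ℂ)‖
        ≤ ∑ l ∈ Finset.Icc n₀ n, ‖Er l * ((a l : ℝ) : ℂ)‖ :=
      norm_sum_le _ _
    have hstep2 : ∑ l ∈ Finset.Icc n₀ n, ‖Er l * ((a l : ℝ) : ℂ)‖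
        ≤ ∑ l ∈ Finset.Icc n₀ n, 2 * Real.pi * M * (a l) ^ 2 := by
      apply Finset.sum_le_sum
      intro l hl
      rw [Finset.mem_Icc] at hl
      exact hebd l hl.1 hl.2
    have hstep3 : ∑ l ∈ Finset.Icc n₀ n, 2 * Real.pi * M * (a l) ^ 2
        ≤ 2 * Real.pi * M * (2 * a n₀) := by
      rw [← Finset.mul_sum]
      apply mul_le_mul_of_nonneg_left _ (by positivity)
      have hsq := sq_sum_bound b n₀ hb n hn
      have hnn : (1:ℝ) ≤ (n : ℝ) - (b : ℝ) := hage n hn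
      rw [hadef]
      simp only
      calc ∑ l ∈ Finset.Icc n₀ n, (1 / ((l : ℝ) - (b : ℝ))) ^ 2
          ≤ 2 / ((n₀ : ℝ) - (b : ℝ)) - 1 / ((n : ℝ) - (b : ℝ)) := hsq
        _ ≤ 2 * (1 / ((n₀ : ℝ) - (b : ℝ))) := by
            rw [mul_one_div]
            have : (0:ℝ) ≤ 1 / ((n : ℝ) - (b : ℝ)) := by positivity
            linarith
    linarith
  -- bound on the telescoping sum
  have htel : ‖∑ l ∈ Finset.Icc n₀ n, (z (l + 1) - z l) * ((a l : ℝ) : ℂ)‖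
      ≤ 2 * a n₀ := by
    apply abel_bound z a n₀
    · intro l _; exact le_of_eq (hzabs l)
    · intro l hl; rw [hadef]; have := hage l hl; positivity
    · intro l hl
      rw [hadef]
      simp only
      have h1 := hage l hl
      have h2 : (0:ℝ) < (l:ℝ) - b := by linarith
      apply div_le_div_of_nonneg_left (by norm_num) h2
      push_cast; linarith
    · exact hn
  -- combine
  have hcomb : ‖w - 1‖
      * ‖∑ l ∈ Finset.Icc n₀ n, z l * ((a l : ℝ) : ℂ)‖
      ≤ (2 + 4 * Real.pi * M) * a n₀ := by
    rw [← norm_mul, hiden]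
    have htri := norm_sub_le
      (∑ l ∈ Finset.Icc n₀ n, (z (l + 1) - z l) * ((a l : ℝ) : ℂ))
      (∑ l ∈ Finset.Icc n₀ n, Er l * ((a l : ℝ) : ℂ))
    have : (2 : ℝ) * a n₀ + 2 * Real.pi * M * (2 * a n₀)
        = (2 + 4 * Real.pi * M) * a n₀ := by ring
    linarith
  -- relate the real sum to the complex one
  have hre : ∑ l ∈ Finset.Icc n₀ n, Real.cos (2 * Real.pi * φ l) / ((l : ℝ) - (b : ℝ))
      = (∑ l ∈ Finset.Icc n₀ n, z l * ((a l : ℝ) : ℂ)).re := by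
    rw [Complex.re_sum]
    apply Finset.sum_congr rfl
    intro l _
    rw [hzdef, hadef]
    simp only [Complex.mul_re, Complex.ofReal_re, Complex.ofReal_im,
      Complex.exp_ofReal_mul_I_re, Complex.exp_ofReal_mul_I_im]
    ring
  rw [hre]
  have habs := Complex.abs_re_le_norm (∑ l ∈ Finset.Icc n₀ n, z l * ((a l : ℝ) : ℂ))
  have hS : ‖∑ l ∈ Finset.Icc n₀ n, z l * ((a l : ℝ) : ℂ)‖
      ≤ (2 + 4 * Real.pi * M) * a n₀ / ‖w - 1‖ := by
    rw [le_div_iff₀ hwpos]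
    linarith [hcomb]
  have hfinal : (2 + 4 * Real.pi * M) * a n₀ / ‖w - 1‖
      = (2 + 4 * Real.pi * M) / ‖w - 1‖ / ((n₀ : ℝ) - (b : ℝ)) := by
    rw [hadef]
    field_simp
  linarith [habs, hS, hfinal.le, hfinal.ge]


lemma exp_ne_one_of_not_int (κ : ℝ) (h : ∀ m : ℤ, κ ≠ m) :
    Complex.exp ((2 * Real.pi * κ : ℝ) * Complex.I) ≠ 1 := by
  intro hc
  rw [Complex.exp_eq_one_iff] at hc
  obtain ⟨m, hm⟩ := hc
  apply h m
  have hm' : ((2 * Real.pi * κ : ℝ) : ℂ) * Complex.I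
      = ((m : ℂ) * (2 * (Real.pi : ℂ))) * Complex.I := by rw [hm]; ring
  have h2 := mul_right_cancel₀ Complex.I_ne_zero hm'
  have h3 : (2 * Real.pi * κ : ℝ) = (m : ℝ) * (2 * Real.pi) := by exact_mod_cast h2
  have h4 : 2 * Real.pi * κ = 2 * Real.pi * (m : ℝ) := by linarith
  exact mul_left_cancel₀ (by positivity) h4

lemma sin_prod_split (x y : ℝ) :
    Real.sin (2 * Real.pi * x) * Real.sin (2 * Real.pi * y)
      = Real.cos (2 * Real.pi * (x - y)) / 2 - Real.cos (2 * Real.pi * (x + y)) / 2 := by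
  rw [show 2 * Real.pi * (x - y) = 2 * Real.pi * x - 2 * Real.pi * y by ring,
    show 2 * Real.pi * (x + y) = 2 * Real.pi * x + 2 * Real.pi * y by ring,
    Real.cos_sub, Real.cos_add]
  ring


/-- Oscillatory sum estimate (Lemma 4.2, second bound): for Prüfer angles `θ`, `θj` of
solutions at two non-resonant energies `E = 2cos(πk)` and `Ej = 2cos(πkj)`
(`Ej ≠ E` and `Ej ≠ -E`), with `|V(n)| ≤ K/(n-b)`, the weighted sums of
`sin(2πθ(l))·sin(2πθj(l))/(l-b)` are bounded by `C(E,Ej,K)/(n₀-b)`. -/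
theorem oscillatory_sum_product (E k Ej kj : ℝ)
    (hE : E ∈ Set.Ioo (-2 : ℝ) 2) (hEj : Ej ∈ Set.Ioo (-2 : ℝ) 2)
    (hk : k ∈ Set.Ioo (0 : ℝ) 1) (hkj : kj ∈ Set.Ioo (0 : ℝ) 1)
    (hEk : E = 2 * Real.cos (Real.pi * k)) (hEjk : Ej = 2 * Real.cos (Real.pi * kj))
    (hne : Ej ≠ E) (hne' : Ej ≠ -E)
    (b : ℕ) (K : ℝ) (hK : 0 < K) :
    ∃ C : ℝ, 0 < C ∧ ∀ V u R θ uj Rj θj : ℕ → ℝ,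
      (∀ n : ℕ, b < n → |V n| ≤ K / ((n : ℝ) - (b : ℝ))) →
      (∀ n : ℕ, b < n → |V n / Real.sin (Real.pi * k)| < 1 / 2) →
      (∀ n : ℕ, b < n → |V n / Real.sin (Real.pi * kj)| < 1 / 2) →
      u ≠ 0 → EigenEq V E u → PruferRel k u R θ → BranchCond k θ →
      uj ≠ 0 → EigenEq V Ej uj → PruferRel kj uj Rj θj → BranchCond kj θj →
      ∀ n₀ n : ℕ, b < n₀ → n₀ < n →
        |∑ l ∈ Finset.Icc n₀ n,
            Real.sin (2 * Real.pi * θ l) * Real.sin (2 * Real.pi * θj l)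
              / ((l : ℝ) - (b : ℝ))|
          ≤ C / ((n₀ : ℝ) - (b : ℝ)) := by
  -- basic positivity
  obtain ⟨hk0, hk1⟩ := hk
  obtain ⟨hkj0, hkj1⟩ := hkj
  have hpi := Real.pi_pos
  have hs : 0 < Real.sin (Real.pi * k) := by
    apply Real.sin_pos_of_pos_of_lt_pi (by positivity)
    nlinarith
  have hsj : 0 < Real.sin (Real.pi * kj) := by
    apply Real.sin_pos_of_pos_of_lt_pi (by positivity)
    nlinarith
  -- non-resonance
  have hkkj : k ≠ kj := by
    intro h
    exact hne (by rw [hEjk, hEk, h])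
  have hsum1 : k + kj ≠ 1 := by
    intro h
    apply hne'
    rw [hEjk, hEk]
    have hkj' : kj = 1 - k := by linarith
    rw [hkj', show Real.pi * (1 - k) = Real.pi - Real.pi * k by ring, Real.cos_pi_sub]
    ring
  have hintm : ∀ m : ℤ, k - kj ≠ (m : ℝ) := by
    intro m hm
    have h1 : (-1 : ℝ) < (m : ℝ) := by rw [← hm]; linarith
    have h2 : (m : ℝ) < 1 := by rw [← hm]; linarith
    have a1 : (-1:ℤ) < m := by exact_mod_cast h1
    have a2 : m < (1:ℤ) := by exact_mod_cast h2
    have : m = 0 := by omega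
    rw [this] at hm
    simp at hm
    exact hkkj (by linarith)
  have hintp : ∀ m : ℤ, k + kj ≠ (m : ℝ) := by
    intro m hm
    have h1 : (0 : ℝ) < (m : ℝ) := by rw [← hm]; linarith
    have h2 : (m : ℝ) < 2 := by rw [← hm]; linarith
    have hm1 : m = 1 := by
      have a1 : (0:ℤ) < m := by exact_mod_cast h1
      have a2 : m < 2 := by exact_mod_cast h2
      omega
    rw [hm1] at hm
    simp at hm
    exact hsum1 hm
  have hwm := exp_ne_one_of_not_int (k - kj) hintm
  have hwp := exp_ne_one_of_not_int (k + kj) hintp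
  have hwposm : 0 < ‖Complex.exp ((2 * Real.pi * (k - kj) : ℝ) * Complex.I) - 1‖ :=
    norm_pos_iff.mpr (sub_ne_zero.mpr hwm)
  have hwposp : 0 < ‖Complex.exp ((2 * Real.pi * (k + kj) : ℝ) * Complex.I) - 1‖ :=
    norm_pos_iff.mpr (sub_ne_zero.mpr hwp)
  -- the constant
  set M : ℝ := K * (1 / Real.sin (Real.pi * k) + 1 / Real.sin (Real.pi * kj)) with hMdef
  have hM : 0 < M := by rw [hMdef]; positivity
  set Bm : ℝ := (2 + 4 * Real.pi * M)
      / ‖Complex.exp ((2 * Real.pi * (k - kj) : ℝ) * Complex.I) - 1‖ with hBm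
  set Bp : ℝ := (2 + 4 * Real.pi * M)
      / ‖Complex.exp ((2 * Real.pi * (k + kj) : ℝ) * Complex.I) - 1‖ with hBp
  have hBposm : 0 < Bm := by rw [hBm]; positivity
  have hBposp : 0 < Bp := by rw [hBp]; positivity
  refine ⟨Bm / 2 + Bp / 2, by positivity, ?_⟩
  intro V u R θ uj Rj θj hV _ _ _ heig hpr hbr _ heigj hprj hbrj n₀ n hbn₀ hn₀n
  rw [hEk] at heig
  rw [hEjk] at heigj
  have han₀ : 0 < ((n₀ : ℝ) - (b : ℝ)) := by
    have : (b : ℝ) + 1 ≤ (n₀ : ℝ) := by exact_mod_cast hbn₀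
    linarith
  -- step estimates for the two phases
  have hstepV : ∀ l : ℕ, n₀ ≤ l → l ≤ n →
      |θ (l + 1) - θ l - k| + |θj (l + 1) - θj l - kj| ≤ M / ((l : ℝ) - (b : ℝ)) := by
    intro l hl1 _
    have hl1' : 1 ≤ l := by omega
    have hbl : b < l := by omega
    have hlb : (0:ℝ) < (l : ℝ) - (b : ℝ) := by
      have : (b : ℝ) + 1 ≤ (l : ℝ) := by exact_mod_cast hbl
      linarith
    have h1 := prufer_step k ⟨hk0, hk1⟩ V u R θ heig hpr hbr l hl1'
    have h2 := prufer_step kj ⟨hkj0, hkj1⟩ V uj Rj θj heigj hprj hbrj l hl1'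
    have hVl := hV l hbl
    calc |θ (l + 1) - θ l - k| + |θj (l + 1) - θj l - kj|
        ≤ |V l| / Real.sin (Real.pi * k) + |V l| / Real.sin (Real.pi * kj) :=
          add_le_add h1 h2
      _ ≤ (K / ((l : ℝ) - (b : ℝ))) / Real.sin (Real.pi * k)
          + (K / ((l : ℝ) - (b : ℝ))) / Real.sin (Real.pi * kj) := by
          gcongr
      _ = M / ((l : ℝ) - (b : ℝ)) := by
          rw [hMdef]
          field_simp
  have hstepm : ∀ l : ℕ, n₀ ≤ l → l ≤ n →
      |(θ (l + 1) - θj (l + 1)) - (θ l - θj l) - (k - kj)| ≤ M / ((l : ℝ) - (b : ℝ)) := by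
    intro l hl1 hl2
    refine le_trans ?_ (hstepV l hl1 hl2)
    have : (θ (l + 1) - θj (l + 1)) - (θ l - θj l) - (k - kj)
        = (θ (l + 1) - θ l - k) - (θj (l + 1) - θj l - kj) := by ring
    rw [this, sub_eq_add_neg]
    refine (abs_add_le _ _).trans ?_
    rw [abs_neg]
  have hstepp : ∀ l : ℕ, n₀ ≤ l → l ≤ n →
      |(θ (l + 1) + θj (l + 1)) - (θ l + θj l) - (k + kj)| ≤ M / ((l : ℝ) - (b : ℝ)) := by
    intro l hl1 hl2
    refine le_trans ?_ (hstepV l hl1 hl2)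
    have : (θ (l + 1) + θj (l + 1)) - (θ l + θj l) - (k + kj)
        = (θ (l + 1) - θ l - k) + (θj (l + 1) - θj l - kj) := by ring
    rw [this]
    exact abs_add_le _ _
  -- apply the oscillatory sum bound to the two phases
  have hoscm := osc_sum (k - kj) b n₀ n hbn₀ hn₀n.le (fun l => θ l - θj l) M hM.le hwm hstepm
  have hoscp := osc_sum (k + kj) b n₀ n hbn₀ hn₀n.le (fun l => θ l + θj l) M hM.le hwp hstepp
  -- split the sum
  have hsplit : ∑ l ∈ Finset.Icc n₀ n,
      Real.sin (2 * Real.pi * θ l) * Real.sin (2 * Real.pi * θj l) / ((l : ℝ) - (b : ℝ))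
      = (∑ l ∈ Finset.Icc n₀ n,
          Real.cos (2 * Real.pi * (θ l - θj l)) / ((l : ℝ) - (b : ℝ))) / 2
        - (∑ l ∈ Finset.Icc n₀ n,
          Real.cos (2 * Real.pi * (θ l + θj l)) / ((l : ℝ) - (b : ℝ))) / 2 := by
    rw [Finset.sum_div, Finset.sum_div, ← Finset.sum_sub_distrib]
    apply Finset.sum_congr rfl
    intro l _
    rw [sin_prod_split]
    ring
  rw [hsplit]
  have htri := abs_sub
    ((∑ l ∈ Finset.Icc n₀ n,
        Real.cos (2 * Real.pi * (θ l - θj l)) / ((l : ℝ) - (b : ℝ))) / 2)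
    ((∑ l ∈ Finset.Icc n₀ n,
        Real.cos (2 * Real.pi * (θ l + θj l)) / ((l : ℝ) - (b : ℝ))) / 2)
  have hhalfm : |(∑ l ∈ Finset.Icc n₀ n,
      Real.cos (2 * Real.pi * (θ l - θj l)) / ((l : ℝ) - (b : ℝ))) / 2|
      ≤ (Bm / ((n₀ : ℝ) - (b : ℝ))) / 2 := by
    rw [abs_div, abs_two]
    apply div_le_div_of_nonneg_right ?_ (by norm_num) |>.trans_eq rfl
    exact hoscm
  have hhalfp : |(∑ l ∈ Finset.Icc n₀ n,
      Real.cos (2 * Real.pi * (θ l + θj l)) / ((l : ℝ) - (b : ℝ))) / 2|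
      ≤ (Bp / ((n₀ : ℝ) - (b : ℝ))) / 2 := by
    rw [abs_div, abs_two]
    apply div_le_div_of_nonneg_right ?_ (by norm_num) |>.trans_eq rfl
    exact hoscp
  have hend : (Bm / ((n₀ : ℝ) - (b : ℝ))) / 2 + (Bp / ((n₀ : ℝ) - (b : ℝ))) / 2
      = (Bm / 2 + Bp / 2) / ((n₀ : ℝ) - (b : ℝ)) := by ring
  linarith
end
end
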